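/- arXiv:1304.5010 — 6 statements merged into one kernel-verified Lean document; each statement's English description precedes it below -/
import Mathlib

section
/- Let G be a finite group and let ρ be a nontrivial irreducible unitary representation of G. Then the operator norm of the average over g ∈ G of the projections Π_g^ρ satisfies ‖ (1/|G|) Σ_{g∈G} Π_g^ρ ‖ ≤ 1 − φ(|G|)/|G|, where φ denotes Euler's totient function. -/
open scoped BigOperators

/-- The operator (ℓ²→ℓ²) norm of a square complex matrix. -/
noncomputable def matOpNorm {m : Type*} [Fintype m] [DecidableEq m] (M : Matrix m m ℂ) : ℝ :=
  ‖Matrix.toEuclideanCLM (𝕜 := ℂ) M‖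

/-- A subspace invariant under every `ρ g`. -/
def RepInvariant {G : Type*} [Group G] {d : ℕ} (ρ : G →* Matrix.unitaryGroup (Fin d) ℂ)
    (W : Submodule ℂ (Fin d → ℂ)) : Prop :=
  ∀ g : G, ∀ v ∈ W, Matrix.mulVec (ρ g : Matrix (Fin d) (Fin d) ℂ) v ∈ W

/-- Irreducibility: the only invariant subspaces are `⊥` and `⊤`. -/
def IsIrreducibleRep {G : Type*} [Group G] {d : ℕ}
    (ρ : G →* Matrix.unitaryGroup (Fin d) ℂ) : Prop :=
  ∀ W : Submodule ℂ (Fin d → ℂ), RepInvariant ρ W → W = ⊥ ∨ W = ⊤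

/-- Nontriviality: `ρ x ≠ I` for some `x`. -/
def IsNontrivialRep {G : Type*} [Group G] {d : ℕ}
    (ρ : G →* Matrix.unitaryGroup (Fin d) ℂ) : Prop :=
  ∃ x : G, (ρ x : Matrix (Fin d) (Fin d) ℂ) ≠ 1

/-- The average `(1/|S|) ∑_{x∈S} ρ(x)` of a representation over a multiset. -/
noncomputable def repAvg {G : Type*} [Group G] {d : ℕ}
    (ρ : G →* Matrix.unitaryGroup (Fin d) ℂ) (S : Multiset G) : Matrix (Fin d) (Fin d) ℂ :=
  (S.card : ℂ)⁻¹ • (S.map fun x => (ρ x : Matrix (Fin d) (Fin d) ℂ)).sum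

/-- A multiset `S` over a finite group is `ε`-biased if every nontrivial irreducible unitary
representation averages to an operator of norm at most `ε` over `S`. -/
def IsEpsBiased {G : Type*} [Group G] (S : Multiset G) (ε : ℝ) : Prop :=
  ∀ (d : ℕ), 0 < d → ∀ ρ : G →* Matrix.unitaryGroup (Fin d) ℂ,
    IsIrreducibleRep ρ → IsNontrivialRep ρ → matOpNorm (repAvg ρ S) ≤ ε

/-- `Π_g^ρ = (1/|G|) ∑_{t=0}^{|G|-1} ρ(g^t)`, the average of `ρ` over the cyclic
subgroup generated by `g`. -/
noncomputable def cyclicProj {G : Type*} [Group G] [Fintype G] {d : ℕ}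
    (ρ : G →* Matrix.unitaryGroup (Fin d) ℂ) (g : G) : Matrix (Fin d) (Fin d) ℂ :=
  (Fintype.card G : ℂ)⁻¹ •
    ∑ t ∈ Finset.range (Fintype.card G), (ρ (g ^ t) : Matrix (Fin d) (Fin d) ℂ)

section Aux

variable {G : Type*} [Group G] [Fintype G] {d : ℕ}

lemma sum_rep_eq_zero (ρ : G →* Matrix.unitaryGroup (Fin d) ℂ)
    (hirr : IsIrreducibleRep ρ) (hnt : IsNontrivialRep ρ) :
    ∑ g : G, (ρ g : Matrix (Fin d) (Fin d) ℂ) = 0 := by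
  classical
  set P := ∑ g : G, (ρ g : Matrix (Fin d) (Fin d) ℂ) with hP
  have hmul : ∀ h : G, (ρ h : Matrix (Fin d) (Fin d) ℂ) * P = P := by
    intro h
    rw [hP, Finset.mul_sum]
    exact Fintype.sum_equiv (Equiv.mulLeft h) _ _ (fun g => by simp [map_mul])
  have hinv : RepInvariant ρ (LinearMap.range (Matrix.mulVecLin P)) := by
    intro g v hv
    obtain ⟨u, hu⟩ := hv
    simp only [Matrix.mulVecLin_apply] at hu
    have hfix : (ρ g : Matrix (Fin d) (Fin d) ℂ).mulVec v = v := by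
      rw [← hu, Matrix.mulVec_mulVec, hmul]
    rw [hfix]
    exact ⟨u, by simpa [Matrix.mulVecLin_apply] using hu⟩
  rcases hirr _ hinv with hbot | htop
  · have hz : ∀ v, P.mulVec v = 0 := by
      intro v
      have hv : Matrix.mulVecLin P v ∈ LinearMap.range (Matrix.mulVecLin P) := ⟨v, rfl⟩
      rw [hbot] at hv
      simpa [Matrix.mulVecLin_apply] using hv
    ext i j
    have := congrFun (hz (Pi.single j 1)) i
    simpa using this
  · exfalso
    obtain ⟨x, hx⟩ := hnt
    apply hx
    have hfix : ∀ v : Fin d → ℂ, (ρ x : Matrix (Fin d) (Fin d) ℂ).mulVec v = v := by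
      intro v
      have hv : v ∈ LinearMap.range (Matrix.mulVecLin P) := htop ▸ Submodule.mem_top
      obtain ⟨u, hu⟩ := hv
      simp only [Matrix.mulVecLin_apply] at hu
      rw [← hu, Matrix.mulVec_mulVec, hmul]
    ext i j
    have := congrFun (hfix (Pi.single j 1)) i
    simpa [Matrix.one_apply, Pi.single_apply, eq_comm] using this

lemma sum_rep_pow_eq (ρ : G →* Matrix.unitaryGroup (Fin d) ℂ) {t : ℕ}
    (h : (Fintype.card G).Coprime t) :
    ∑ g : G, (ρ (g ^ t) : Matrix (Fin d) (Fin d) ℂ) = ∑ g : G, (ρ g : Matrix (Fin d) (Fin d) ℂ) := by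
  have h' : (Nat.card G).Coprime t := by rwa [Nat.card_eq_fintype_card]
  exact Fintype.sum_equiv (powCoprime h') _ _ (fun g => rfl)

lemma norm_toE_rep (hd : 0 < d) (ρ : G →* Matrix.unitaryGroup (Fin d) ℂ) (x : G) :
    ‖Matrix.toEuclideanCLM (𝕜 := ℂ) (ρ x : Matrix (Fin d) (Fin d) ℂ)‖ = 1 := by
  haveI : Nonempty (Fin d) := ⟨⟨0, hd⟩⟩
  set U := Matrix.toEuclideanCLM (𝕜 := ℂ) (ρ x : Matrix (Fin d) (Fin d) ℂ) with hU
  have h1 : star U * U = 1 := by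
    rw [hU, ← map_star, ← map_mul, (Unitary.mem_iff.mp (ρ x).prop).1, map_one]
  have h2 := CStarRing.norm_star_mul_self (x := U)
  rw [h1, norm_one] at h2
  nlinarith [norm_nonneg U]

end Aux


set_option synthInstance.maxHeartbeats 1000000 in
set_option maxHeartbeats 1000000 in
/-- Lemma 5 of the paper: for a nontrivial irreducible unitary
representation `ρ` of a finite group `G`,
`‖(1/|G|) ∑_{g∈G} Π_g^ρ‖ ≤ 1 − φ(|G|)/|G|`. -/
theorem norm_avg_cyclicProj_le {G : Type*} [Group G] [Fintype G] {d : ℕ}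
    (ρ : G →* Matrix.unitaryGroup (Fin d) ℂ)
    (hirr : IsIrreducibleRep ρ) (hnt : IsNontrivialRep ρ) :
    matOpNorm ((Fintype.card G : ℂ)⁻¹ • ∑ g : G, cyclicProj ρ g) ≤
      1 - (Nat.totient (Fintype.card G) : ℝ) / (Fintype.card G : ℝ) := by
  classical
  set n := Fintype.card G with hn
  have hn0 : 0 < n := Fintype.card_pos
  obtain ⟨x₀, hx₀⟩ := hnt
  have hd : 0 < d := by
    rcases Nat.eq_zero_or_pos d with h | h
    · subst h; exact absurd (Subsingleton.elim _ _) hx₀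
    · exact h
  set B := (Finset.range n).filter (fun t => ¬ n.Coprime t) with hB
  have hM : ((n : ℂ)⁻¹ • ∑ g : G, cyclicProj ρ g)
      = ((n : ℂ)⁻¹ * (n : ℂ)⁻¹) •
        ∑ t ∈ B, ∑ g : G, (ρ (g ^ t) : Matrix (Fin d) (Fin d) ℂ) := by
    have h1 : ∑ g : G, cyclicProj ρ g
        = (n : ℂ)⁻¹ • ∑ t ∈ Finset.range n, ∑ g : G, (ρ (g ^ t) : Matrix (Fin d) (Fin d) ℂ) := by
      unfold cyclicProj
      rw [← Finset.smul_sum, Finset.sum_comm]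
    have h2 : ∑ t ∈ Finset.range n, ∑ g : G, (ρ (g ^ t) : Matrix (Fin d) (Fin d) ℂ)
        = ∑ t ∈ B, ∑ g : G, (ρ (g ^ t) : Matrix (Fin d) (Fin d) ℂ) := by
      rw [← Finset.sum_filter_add_sum_filter_not (Finset.range n) (fun t => n.Coprime t), ← hB]
      have h3 : ∑ t ∈ (Finset.range n).filter (fun t => n.Coprime t),
          ∑ g : G, (ρ (g ^ t) : Matrix (Fin d) (Fin d) ℂ) = 0 := by
        apply Finset.sum_eq_zero
        intro t ht
        have hc : n.Coprime t := (Finset.mem_filter.mp ht).2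
        rw [sum_rep_pow_eq ρ hc, sum_rep_eq_zero ρ hirr ⟨x₀, hx₀⟩]
      rw [h3, zero_add]
    rw [h1, h2, smul_smul]
  rw [matOpNorm, hM, map_smul, map_sum]
  rw [norm_smul ((n : ℂ)⁻¹ * (n : ℂ)⁻¹)
    (∑ t ∈ B, Matrix.toEuclideanCLM (𝕜 := ℂ) (∑ g : G, (ρ (g ^ t) : Matrix (Fin d) (Fin d) ℂ)))]
  have hc : ‖(n : ℂ)⁻¹ * (n : ℂ)⁻¹‖ = (n : ℝ)⁻¹ * (n : ℝ)⁻¹ := by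
    simp
  rw [hc]
  have hterm : ∀ t ∈ B,
      ‖Matrix.toEuclideanCLM (𝕜 := ℂ) (∑ g : G, (ρ (g ^ t) : Matrix (Fin d) (Fin d) ℂ))‖ ≤ (n : ℝ) := by
    intro t _
    rw [map_sum]
    calc ‖∑ g : G, Matrix.toEuclideanCLM (𝕜 := ℂ) (ρ (g ^ t) : Matrix (Fin d) (Fin d) ℂ)‖
        ≤ ∑ g : G, ‖Matrix.toEuclideanCLM (𝕜 := ℂ) (ρ (g ^ t) : Matrix (Fin d) (Fin d) ℂ)‖ :=
          norm_sum_le _ _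
      _ ≤ ∑ _g : G, (1 : ℝ) := Finset.sum_le_sum fun g _ => le_of_eq (norm_toE_rep hd ρ _)
      _ = (n : ℝ) := by simp [hn]
  have hcard : (B.card : ℝ) = (n : ℝ) - (Nat.totient n : ℝ) := by
    have h4 : ((Finset.range n).filter (fun t => n.Coprime t)).card + B.card = n := by
      rw [hB]
      simpa using Finset.card_filter_add_card_filter_not
        (s := Finset.range n) (p := fun t => n.Coprime t)
    have h5 : ((Finset.range n).filter (fun t => n.Coprime t)).card = Nat.totient n := by
      rw [Nat.totient]
    rw [h5] at h4
    have : (Nat.totient n : ℝ) + (B.card : ℝ) = (n : ℝ) := by exact_mod_cast congrArg (Nat.cast : ℕ → ℝ) h4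
    linarith
  calc (n : ℝ)⁻¹ * (n : ℝ)⁻¹ *
        ‖∑ t ∈ B, Matrix.toEuclideanCLM (𝕜 := ℂ) (∑ g : G, (ρ (g ^ t) : Matrix (Fin d) (Fin d) ℂ))‖
      ≤ (n : ℝ)⁻¹ * (n : ℝ)⁻¹ * (B.card * (n : ℝ)) := by
        apply mul_le_mul_of_nonneg_left _ (by positivity)
        calc ‖∑ t ∈ B, Matrix.toEuclideanCLM (𝕜 := ℂ) (∑ g : G, (ρ (g ^ t) : Matrix (Fin d) (Fin d) ℂ))‖
            ≤ ∑ t ∈ B, ‖Matrix.toEuclideanCLM (𝕜 := ℂ) (∑ g : G, (ρ (g ^ t) : Matrix (Fin d) (Fin d) ℂ))‖ :=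
              norm_sum_le _ _
          _ ≤ ∑ _t ∈ B, (n : ℝ) := Finset.sum_le_sum hterm
          _ = B.card * (n : ℝ) := by rw [Finset.sum_const, nsmul_eq_mul]
    _ = 1 - (Nat.totient n : ℝ) / (n : ℝ) := by
        rw [hcard]
        have hnr : (n : ℝ) ≠ 0 := Nat.cast_ne_zero.mpr hn0.ne'
        field_simp
end

section
/- Let Γ = (U, V; E) be a bipartite (n, d, λ)-expander. Associate with each vertex s ∈ U ∪ V a vector x^s in a finite-dimensional complex Hilbert space such that Σ_{u∈U} x^u = 0 and Σ_{v∈V} x^v = 0. Then | (1/(nd)) Σ_{(u,v)∈E} ⟨x^u, x^v⟩ | ≤ λ · (1/(2n)) Σ_{s∈U∪V} ‖x^s‖². -/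
open scoped BigOperators

/-- The action of the normalized adjacency matrix `M = A/d` of a bipartite graph with
edge set `E ⊆ U × V` on a vector `y : U ⊕ V → ℝ`. -/
noncomputable def adjAct {U V : Type*} [Fintype U] [Fintype V] [DecidableEq U] [DecidableEq V]
    (E : Finset (U × V)) (d : ℕ) (y : U ⊕ V → ℝ) : U ⊕ V → ℝ
  | Sum.inl u => (∑ e ∈ E.filter fun e => e.1 = u, y (Sum.inr e.2)) / d
  | Sum.inr v => (∑ e ∈ E.filter fun e => e.2 = v, y (Sum.inl e.1)) / d

/-- A bipartite `(n, d, λ)`-expander: a connected `d`-regular bipartite graph on parts `U, V`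
of size `n` each, whose normalized adjacency matrix `M` satisfies `‖M y‖ ≤ λ‖y‖` for every
`y` orthogonal to the all-ones vector `y⁺` and to `y⁻` (which is `+1` on `U`, `−1` on `V`). -/
structure BipartiteExpander (U V : Type*) [Fintype U] [Fintype V] [DecidableEq U] [DecidableEq V]
    (n d : ℕ) (lam : ℝ) where
  E : Finset (U × V)
  card_U : Fintype.card U = n
  card_V : Fintype.card V = n
  degU : ∀ u : U, (E.filter fun e => e.1 = u).card = d
  degV : ∀ v : V, (E.filter fun e => e.2 = v).card = d
  connected : ∀ a b : U ⊕ V, Relation.ReflTransGen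
    (fun a b => ∃ e ∈ E, (a = Sum.inl e.1 ∧ b = Sum.inr e.2) ∨
      (a = Sum.inr e.2 ∧ b = Sum.inl e.1)) a b
  spectral : ∀ y : U ⊕ V → ℝ,
    (∑ s : U ⊕ V, y s * 1) = 0 →
    (∑ s : U ⊕ V, y s * Sum.elim (fun _ => (1 : ℝ)) (fun _ => (-1 : ℝ)) s) = 0 →
    Real.sqrt (∑ s : U ⊕ V, adjAct E d y s ^ 2) ≤ lam * Real.sqrt (∑ s : U ⊕ V, y s ^ 2)

/-- Quadratic form bound for a real vector with zero sum on each side. -/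
private lemma quad_bound {U V : Type*} [Fintype U] [Fintype V]
    [DecidableEq U] [DecidableEq V] {n d : ℕ} {lam : ℝ}
    (Γ : BipartiteExpander U V n d lam) (hd : d ≠ 0) (w : U ⊕ V → ℝ)
    (h1 : ∑ u : U, w (Sum.inl u) = 0) (h2 : ∑ v : V, w (Sum.inr v) = 0) :
    ∑ e ∈ Γ.E, w (Sum.inl e.1) * w (Sum.inr e.2) ≤
      lam * d / 2 * ∑ s : U ⊕ V, w s ^ 2 := by
  have hd' : (0:ℝ) < d := by positivity
  set T : ℝ := ∑ e ∈ Γ.E, w (Sum.inl e.1) * w (Sum.inr e.2) with hT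
  -- ⟨w, M w⟩ = 2 T / d
  have hT1 : ∑ u : U, w (Sum.inl u) * adjAct Γ.E d w (Sum.inl u) = T / d := by
    have : ∀ u : U, w (Sum.inl u) * adjAct Γ.E d w (Sum.inl u)
        = (∑ e ∈ Γ.E.filter fun e => e.1 = u,
            w (Sum.inl e.1) * w (Sum.inr e.2)) / d := by
      intro u
      show w (Sum.inl u) * ((∑ e ∈ Γ.E.filter fun e => e.1 = u, w (Sum.inr e.2)) / d) = _
      rw [← mul_div_assoc, Finset.mul_sum]
      congr 1
      refine Finset.sum_congr rfl fun e he => ?_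
      rw [(Finset.mem_filter.1 he).2]
    rw [Finset.sum_congr rfl fun u _ => this u, ← Finset.sum_div]
    congr 1
    exact Finset.sum_fiberwise Γ.E (fun e => e.1) _
  have hT2 : ∑ v : V, w (Sum.inr v) * adjAct Γ.E d w (Sum.inr v) = T / d := by
    have : ∀ v : V, w (Sum.inr v) * adjAct Γ.E d w (Sum.inr v)
        = (∑ e ∈ Γ.E.filter fun e => e.2 = v,
            w (Sum.inl e.1) * w (Sum.inr e.2)) / d := by
      intro v
      show w (Sum.inr v) * ((∑ e ∈ Γ.E.filter fun e => e.2 = v, w (Sum.inl e.1)) / d) = _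
      rw [← mul_div_assoc, Finset.mul_sum]
      congr 1
      refine Finset.sum_congr rfl fun e he => ?_
      rw [(Finset.mem_filter.1 he).2, mul_comm]
    rw [Finset.sum_congr rfl fun v _ => this v, ← Finset.sum_div]
    congr 1
    exact Finset.sum_fiberwise Γ.E (fun e => e.2) _
  have key : ∑ s : U ⊕ V, w s * adjAct Γ.E d w s = 2 * T / d := by
    rw [Fintype.sum_sum_type, hT1, hT2]; ring
  -- Cauchy–Schwarz
  have hw0 : (0:ℝ) ≤ ∑ s : U ⊕ V, w s ^ 2 := Finset.sum_nonneg fun s _ => sq_nonneg _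
  have cs : ∑ s : U ⊕ V, w s * adjAct Γ.E d w s ≤
      Real.sqrt (∑ s : U ⊕ V, w s ^ 2) * Real.sqrt (∑ s : U ⊕ V, adjAct Γ.E d w s ^ 2) := by
    have h := Finset.sum_mul_sq_le_sq_mul_sq Finset.univ (fun s : U ⊕ V => w s)
      (fun s => adjAct Γ.E d w s)
    calc ∑ s : U ⊕ V, w s * adjAct Γ.E d w s
        ≤ |∑ s : U ⊕ V, w s * adjAct Γ.E d w s| := le_abs_self _
      _ = Real.sqrt ((∑ s : U ⊕ V, w s * adjAct Γ.E d w s) ^ 2) :=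
          (Real.sqrt_sq_eq_abs _).symm
      _ ≤ Real.sqrt ((∑ s : U ⊕ V, w s ^ 2) * ∑ s : U ⊕ V, adjAct Γ.E d w s ^ 2) :=
          Real.sqrt_le_sqrt h
      _ = _ := Real.sqrt_mul hw0 _
  -- spectral bound
  have ho1 : (∑ s : U ⊕ V, w s * 1) = 0 := by
    simp only [mul_one, Fintype.sum_sum_type, h1, h2, add_zero]
  have ho2 : (∑ s : U ⊕ V, w s *
      Sum.elim (fun _ => (1 : ℝ)) (fun _ => (-1 : ℝ)) s) = 0 := by
    simp only [Fintype.sum_sum_type, Sum.elim_inl, Sum.elim_inr, mul_one, mul_neg_one,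
      Finset.sum_neg_distrib, h1, h2, neg_zero, add_zero]
  have hspec := Γ.spectral w ho1 ho2
  have hfin : 2 * T / d ≤ lam * ∑ s : U ⊕ V, w s ^ 2 := by
    calc 2 * T / d = ∑ s : U ⊕ V, w s * adjAct Γ.E d w s := key.symm
      _ ≤ Real.sqrt (∑ s : U ⊕ V, w s ^ 2) *
          Real.sqrt (∑ s : U ⊕ V, adjAct Γ.E d w s ^ 2) := cs
      _ ≤ Real.sqrt (∑ s : U ⊕ V, w s ^ 2) *
          (lam * Real.sqrt (∑ s : U ⊕ V, w s ^ 2)) :=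
          mul_le_mul_of_nonneg_left hspec (Real.sqrt_nonneg _)
      _ = lam * (Real.sqrt (∑ s : U ⊕ V, w s ^ 2) *
          Real.sqrt (∑ s : U ⊕ V, w s ^ 2)) := by ring
      _ = lam * ∑ s : U ⊕ V, w s ^ 2 := by rw [Real.mul_self_sqrt hw0]
  rw [div_le_iff₀ hd'] at hfin
  nlinarith [hfin]

/-- Lemma 10 of the paper: if vectors `x^s` summing to zero on each side
are placed on the vertices of a bipartite `(n, d, λ)`-expander, then
`|(1/(nd)) ∑_{(u,v)∈E} ⟨x^u, x^v⟩| ≤ λ · (1/(2n)) ∑_s ‖x^s‖²`. -/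
theorem expander_vector_mixing {U V : Type*} [Fintype U] [Fintype V]
    [DecidableEq U] [DecidableEq V] {n d : ℕ} {lam : ℝ}
    (Γ : BipartiteExpander U V n d lam) {m : ℕ}
    (x : U ⊕ V → EuclideanSpace ℂ (Fin m))
    (hU : ∑ u : U, x (Sum.inl u) = 0) (hV : ∑ v : V, x (Sum.inr v) = 0) :
    ‖((n * d : ℕ) : ℂ)⁻¹ *
        ∑ e ∈ Γ.E, (inner ℂ (x (Sum.inl e.1)) (x (Sum.inr e.2)) : ℂ)‖ ≤
      lam * (((2 * n : ℕ) : ℝ)⁻¹ * ∑ s : U ⊕ V, ‖x s‖ ^ 2) := by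
  by_cases hn : n = 0
  · -- degenerate case: everything is empty
    subst hn
    have hUe : IsEmpty U := Fintype.card_eq_zero_iff.mp Γ.card_U
    have hVe : IsEmpty V := Fintype.card_eq_zero_iff.mp Γ.card_V
    have hE : Γ.E = ∅ := Finset.eq_empty_of_forall_notMem fun e _ => hUe.elim e.1
    simp [hE]
  -- main case
  have hcU := Γ.card_U
  have hcV := Γ.card_V
  obtain ⟨u₀⟩ : Nonempty U := Fintype.card_pos_iff.mp (by omega)
  obtain ⟨v₀⟩ : Nonempty V := Fintype.card_pos_iff.mp (by omega)
  -- the graph has at least one edge, hence `d ≠ 0`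
  have hd : d ≠ 0 := by
    rcases (Γ.connected (Sum.inl u₀) (Sum.inr v₀)).cases_head with heq | ⟨a, ⟨e, he, _⟩, _⟩
    · exact absurd heq (by simp)
    · intro h0
      have h1 := Γ.degU e.1
      have hmem : e ∈ Γ.E.filter (fun e' => e'.1 = e.1) := Finset.mem_filter.2 ⟨he, rfl⟩
      have hpos : 0 < (Γ.E.filter (fun e' => e'.1 = e.1)).card := Finset.card_pos.mpr ⟨e, hmem⟩
      omega
  set S : ℂ := ∑ e ∈ Γ.E, (inner ℂ (x (Sum.inl e.1)) (x (Sum.inr e.2)) : ℂ) with hS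
  set c : ℂ := if S = 0 then 1 else (starRingEnd ℂ) S / (‖S‖ : ℂ) with hc
  have hc1 : ‖c‖ = 1 := by
    rw [hc]; split_ifs with h
    · simp
    · rw [norm_div, RCLike.norm_conj, Complex.norm_real,
        norm_norm]
      exact div_self (norm_ne_zero_iff.mpr h)
  have hcS : (c * S).re = ‖S‖ := by
    rw [hc]; split_ifs with h
    · simp [h]
    · have hSn : (‖S‖ : ℂ) ≠ 0 := by
        exact_mod_cast (Complex.ofReal_ne_zero.mpr (norm_ne_zero_iff.mpr h))
      have : (starRingEnd ℂ) S / (‖S‖ : ℂ) * S = ((‖S‖ : ℝ) : ℂ) := by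
        rw [div_mul_eq_mul_div, mul_comm, Complex.mul_conj, Complex.normSq_eq_norm_sq,
          sq]
        push_cast
        rw [mul_div_assoc, div_self hSn, mul_one]
      rw [this, Complex.ofReal_re]
  set x' : U ⊕ V → EuclideanSpace ℂ (Fin m) :=
    Sum.elim (fun u => x (Sum.inl u)) (fun v => c • x (Sum.inr v)) with hx'
  have hx'norm : ∀ s, ‖x' s‖ = ‖x s‖ := by
    rintro (u | v)
    · rfl
    · show ‖c • x (Sum.inr v)‖ = _
      rw [norm_smul, hc1, one_mul]
  -- each coordinate of the sums vanishes
  have hUk : ∀ k : Fin m, ∑ u : U, x' (Sum.inl u) k = 0 := by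
    intro k
    have h0 : (∑ u : U, x (Sum.inl u)) k = (0 : EuclideanSpace ℂ (Fin m)) k := by rw [hU]
    rw [WithLp.ofLp_sum, Finset.sum_apply] at h0
    simpa [hx'] using h0
  have hVk : ∀ k : Fin m, ∑ v : V, x' (Sum.inr v) k = 0 := by
    intro k
    have h0 : (∑ v : V, x (Sum.inr v)) k = (0 : EuclideanSpace ℂ (Fin m)) k := by rw [hV]
    rw [WithLp.ofLp_sum, Finset.sum_apply] at h0
    have : ∑ v : V, x' (Sum.inr v) k = c * ∑ v : V, x (Sum.inr v) k := by
      rw [Finset.mul_sum]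
      refine Finset.sum_congr rfl fun v _ => ?_
      rfl
    rw [this]
    simp only [PiLp.zero_apply] at h0
    rw [h0, mul_zero]
  -- coordinatewise application of the quadratic-form bound
  have main : ∀ k : Fin m,
      (∑ e ∈ Γ.E, ((starRingEnd ℂ) (x' (Sum.inl e.1) k) * x' (Sum.inr e.2) k).re)
        ≤ lam * d / 2 * ∑ s : U ⊕ V, ‖x' s k‖ ^ 2 := by
    intro k
    have hp := quad_bound Γ hd (fun s => (x' s k).re)
      (by rw [← Complex.re_sum]; rw [hUk k]; simp)
      (by rw [← Complex.re_sum]; rw [hVk k]; simp)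
    have hq := quad_bound Γ hd (fun s => (x' s k).im)
      (by rw [← Complex.im_sum]; rw [hUk k]; simp)
      (by rw [← Complex.im_sum]; rw [hVk k]; simp)
    have hterm : ∀ e : U × V,
        ((starRingEnd ℂ) (x' (Sum.inl e.1) k) * x' (Sum.inr e.2) k).re
          = (x' (Sum.inl e.1) k).re * (x' (Sum.inr e.2) k).re
            + (x' (Sum.inl e.1) k).im * (x' (Sum.inr e.2) k).im := by
      intro e
      rw [Complex.mul_re, Complex.conj_re, Complex.conj_im]
      ring
    have hns : ∀ s : U ⊕ V, ‖x' s k‖ ^ 2 = (x' s k).re ^ 2 + (x' s k).im ^ 2 := by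
      intro s
      rw [Complex.sq_norm, Complex.normSq_apply]
      ring
    calc (∑ e ∈ Γ.E, ((starRingEnd ℂ) (x' (Sum.inl e.1) k) * x' (Sum.inr e.2) k).re)
        = (∑ e ∈ Γ.E, (x' (Sum.inl e.1) k).re * (x' (Sum.inr e.2) k).re)
          + (∑ e ∈ Γ.E, (x' (Sum.inl e.1) k).im * (x' (Sum.inr e.2) k).im) := by
          rw [← Finset.sum_add_distrib]
          exact Finset.sum_congr rfl fun e _ => hterm e
      _ ≤ lam * d / 2 * (∑ s : U ⊕ V, (x' s k).re ^ 2)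
          + lam * d / 2 * (∑ s : U ⊕ V, (x' s k).im ^ 2) := add_le_add hp hq
      _ = lam * d / 2 * ∑ s : U ⊕ V, ((x' s k).re ^ 2 + (x' s k).im ^ 2) := by
          rw [Finset.sum_add_distrib]; ring
      _ = lam * d / 2 * ∑ s : U ⊕ V, ‖x' s k‖ ^ 2 := by
          congr 1
          exact Finset.sum_congr rfl fun s _ => (hns s).symm
  -- sum over the coordinates
  have hnormS : ‖S‖ ≤ lam * d / 2 * ∑ s : U ⊕ V, ‖x s‖ ^ 2 := by
    have hcs : c * S = ∑ e ∈ Γ.E, (inner ℂ (x' (Sum.inl e.1)) (x' (Sum.inr e.2)) : ℂ) := by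
      rw [hS, Finset.mul_sum]
      refine Finset.sum_congr rfl fun e _ => ?_
      show c * (inner ℂ (x (Sum.inl e.1)) (x (Sum.inr e.2)) : ℂ)
        = (inner ℂ (x (Sum.inl e.1)) (c • x (Sum.inr e.2)) : ℂ)
      rw [inner_smul_right]
    have h1 : ‖S‖ = ∑ k : Fin m, ∑ e ∈ Γ.E,
        ((starRingEnd ℂ) (x' (Sum.inl e.1) k) * x' (Sum.inr e.2) k).re := by
      rw [← hcS, hcs, Complex.re_sum, Finset.sum_comm]
      refine Finset.sum_congr rfl fun e _ => ?_
      rw [PiLp.inner_apply, Complex.re_sum]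
      refine Finset.sum_congr rfl fun k _ => ?_
      rw [RCLike.inner_apply']
    have h2 : ∑ s : U ⊕ V, ‖x s‖ ^ 2 = ∑ k : Fin m, ∑ s : U ⊕ V, ‖x' s k‖ ^ 2 := by
      rw [Finset.sum_comm]
      refine Finset.sum_congr rfl fun s _ => ?_
      rw [← hx'norm s, EuclideanSpace.norm_eq,
        Real.sq_sqrt (Finset.sum_nonneg fun k _ => sq_nonneg _)]
    calc ‖S‖ = ∑ k : Fin m, ∑ e ∈ Γ.E,
          ((starRingEnd ℂ) (x' (Sum.inl e.1) k) * x' (Sum.inr e.2) k).re := h1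
      _ ≤ ∑ k : Fin m, lam * d / 2 * ∑ s : U ⊕ V, ‖x' s k‖ ^ 2 :=
          Finset.sum_le_sum fun k _ => main k
      _ = lam * d / 2 * ∑ k : Fin m, ∑ s : U ⊕ V, ‖x' s k‖ ^ 2 := by
          rw [Finset.mul_sum]
      _ = lam * d / 2 * ∑ s : U ⊕ V, ‖x s‖ ^ 2 := by rw [← h2]
  -- conclude
  have hn' : (n : ℝ) ≠ 0 := Nat.cast_ne_zero.mpr hn
  have hd' : (d : ℝ) ≠ 0 := Nat.cast_ne_zero.mpr hd
  have hLHS : ‖((n * d : ℕ) : ℂ)⁻¹ * S‖ = ((n * d : ℕ) : ℝ)⁻¹ * ‖S‖ := by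
    rw [norm_mul, norm_inv, RCLike.norm_natCast]
  rw [hLHS]
  calc ((n * d : ℕ) : ℝ)⁻¹ * ‖S‖
      ≤ ((n * d : ℕ) : ℝ)⁻¹ * (lam * d / 2 * ∑ s : U ⊕ V, ‖x s‖ ^ 2) :=
        mul_le_mul_of_nonneg_left hnormS (by positivity)
    _ = lam * (((2 * n : ℕ) : ℝ)⁻¹ * ∑ s : U ⊕ V, ‖x s‖ ^ 2) := by
        push_cast
        field_simp
end

section
/- Let Γ = (U, V; E) be a bipartite (n, d, λ)-expander. Associate with each vertex s ∈ U ∪ V a vector x^s in a finite-dimensional complex Hilbert space, and let ε_U = ‖ (1/n) Σ_{u∈U} x^u ‖ and ε_V = ‖ (1/n) Σ_{v∈V} x^v ‖. Then | (1/(nd)) Σ_{(u,v)∈E} ⟨x^u, x^v⟩ | ≤ λ · ( (1/(2n)) Σ_{s∈U∪V} ‖x^s‖² − ε_U²/2 − ε_V²/2 ) + ε_U ε_V. -/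
open scoped BigOperators

lemma scalar_bound {U V : Type*} [Fintype U] [Fintype V] [DecidableEq U] [DecidableEq V]
    {n d : ℕ} {lam : ℝ} (Γ : BipartiteExpander U V n d lam) (hd : 0 < d)
    (w : U ⊕ V → ℝ) (hwU : ∑ u : U, w (Sum.inl u) = 0) (hwV : ∑ v : V, w (Sum.inr v) = 0) :
    |∑ e ∈ Γ.E, w (Sum.inl e.1) * w (Sum.inr e.2)| ≤
      lam * d / 2 * ∑ s : U ⊕ V, w s ^ 2 := by
  have hd' : (d : ℝ) ≠ 0 := Nat.cast_ne_zero.mpr hd.ne'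
  set S := ∑ e ∈ Γ.E, w (Sum.inl e.1) * w (Sum.inr e.2) with hS
  -- double counting identity
  have hid : ∑ s : U ⊕ V, w s * adjAct Γ.E d w s = 2 / d * S := by
    rw [Fintype.sum_sum_type]
    have h1 : ∑ u : U, w (Sum.inl u) * adjAct Γ.E d w (Sum.inl u) = S / d := by
      have : ∀ u : U, w (Sum.inl u) * adjAct Γ.E d w (Sum.inl u)
          = (∑ e ∈ Γ.E.filter fun e => e.1 = u, w (Sum.inl e.1) * w (Sum.inr e.2)) / d := by
        intro u
        simp only [adjAct, Finset.sum_div, Finset.mul_sum, mul_div_assoc]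
        refine Finset.sum_congr rfl fun e he => ?_
        rw [(Finset.mem_filter.1 he).2]
      simp only [this, ← Finset.sum_div]
      rw [Finset.sum_fiberwise Γ.E (fun e => e.1) (fun e => w (Sum.inl e.1) * w (Sum.inr e.2))]
    have h2 : ∑ v : V, w (Sum.inr v) * adjAct Γ.E d w (Sum.inr v) = S / d := by
      have : ∀ v : V, w (Sum.inr v) * adjAct Γ.E d w (Sum.inr v)
          = (∑ e ∈ Γ.E.filter fun e => e.2 = v, w (Sum.inl e.1) * w (Sum.inr e.2)) / d := by
        intro v
        simp only [adjAct, Finset.sum_div, Finset.mul_sum, mul_div_assoc]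
        refine Finset.sum_congr rfl fun e he => ?_
        rw [(Finset.mem_filter.1 he).2]; ring
      simp only [this, ← Finset.sum_div]
      rw [Finset.sum_fiberwise Γ.E (fun e => e.2) (fun e => w (Sum.inl e.1) * w (Sum.inr e.2))]
    rw [h1, h2]; field_simp; ring
  -- orthogonality
  have hplus : (∑ s : U ⊕ V, w s * 1) = 0 := by
    simp only [mul_one, Fintype.sum_sum_type, hwU, hwV, add_zero]
  have hminus : (∑ s : U ⊕ V, w s * Sum.elim (fun _ => (1 : ℝ)) (fun _ => (-1 : ℝ)) s) = 0 := by
    rw [Fintype.sum_sum_type]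
    simp only [Sum.elim_inl, Sum.elim_inr, mul_one, mul_neg, Finset.sum_neg_distrib, hwU, hwV]
    simp
  have hspec := Γ.spectral w hplus hminus
  -- Cauchy-Schwarz
  have hw2 : (0:ℝ) ≤ ∑ s : U ⊕ V, w s ^ 2 := Finset.sum_nonneg fun s _ => sq_nonneg _
  have hM2 : (0:ℝ) ≤ ∑ s : U ⊕ V, adjAct Γ.E d w s ^ 2 := Finset.sum_nonneg fun s _ => sq_nonneg _
  have hcs : |∑ s : U ⊕ V, w s * adjAct Γ.E d w s| ≤
      Real.sqrt (∑ s : U ⊕ V, w s ^ 2) * Real.sqrt (∑ s : U ⊕ V, adjAct Γ.E d w s ^ 2) := by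
    rw [← Real.sqrt_mul_self (abs_nonneg _), ← Real.sqrt_mul hw2]
    refine Real.sqrt_le_sqrt ?_
    rw [abs_mul_abs_self, ← sq]
    exact Finset.sum_mul_sq_le_sq_mul_sq _ _ _
  have key : |∑ s : U ⊕ V, w s * adjAct Γ.E d w s| ≤ lam * ∑ s : U ⊕ V, w s ^ 2 := by
    calc |∑ s : U ⊕ V, w s * adjAct Γ.E d w s|
        ≤ Real.sqrt (∑ s : U ⊕ V, w s ^ 2) * Real.sqrt (∑ s : U ⊕ V, adjAct Γ.E d w s ^ 2) := hcs
      _ ≤ Real.sqrt (∑ s : U ⊕ V, w s ^ 2) * (lam * Real.sqrt (∑ s : U ⊕ V, w s ^ 2)) :=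
          mul_le_mul_of_nonneg_left hspec (Real.sqrt_nonneg _)
      _ = lam * ∑ s : U ⊕ V, w s ^ 2 := by
          rw [mul_comm, mul_assoc, Real.mul_self_sqrt hw2]
  rw [hid] at key
  have : |S| = d / 2 * |2 / d * S| := by
    rw [abs_mul]; rw [abs_of_nonneg (by positivity : (0:ℝ) ≤ 2/(d:ℝ))]; field_simp
  rw [this]
  calc (d:ℝ) / 2 * |2 / d * S| ≤ d / 2 * (lam * ∑ s : U ⊕ V, w s ^ 2) :=
        mul_le_mul_of_nonneg_left key (by positivity)
    _ = lam * d / 2 * ∑ s : U ⊕ V, w s ^ 2 := by ring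

lemma euclid_sq_norm {m : ℕ} (a : EuclideanSpace ℂ (Fin m)) :
    ‖a‖ ^ 2 = ∑ k : Fin m, ((a k).re ^ 2 + (a k).im ^ 2) := by
  rw [EuclideanSpace.norm_eq, Real.sq_sqrt (Finset.sum_nonneg fun k _ => sq_nonneg _)]
  refine Finset.sum_congr rfl fun k _ => ?_
  rw [Complex.sq_norm, Complex.normSq_apply]; ring

lemma sum_apply_euclid {ι : Type*} (s : Finset ι) {m : ℕ}
    (f : ι → EuclideanSpace ℂ (Fin m)) (k : Fin m) :
    (∑ i ∈ s, f i) k = ∑ i ∈ s, f i k :=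
  by rw [WithLp.ofLp_sum, Finset.sum_apply]

lemma vector_bound {U V : Type*} [Fintype U] [Fintype V] [DecidableEq U] [DecidableEq V]
    {n d : ℕ} {lam : ℝ} (Γ : BipartiteExpander U V n d lam) (hd : 0 < d) {m : ℕ}
    (y : U ⊕ V → EuclideanSpace ℂ (Fin m))
    (hyU : ∑ u : U, y (Sum.inl u) = 0) (hyV : ∑ v : V, y (Sum.inr v) = 0) :
    ‖∑ e ∈ Γ.E, (inner ℂ (y (Sum.inl e.1)) (y (Sum.inr e.2)) : ℂ)‖ ≤
      lam * d / 2 * ∑ s : U ⊕ V, ‖y s‖ ^ 2 := by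
  set Z : ℂ := ∑ e ∈ Γ.E, (inner ℂ (y (Sum.inl e.1)) (y (Sum.inr e.2)) : ℂ) with hZdef
  obtain ⟨c, hc1, hcZ⟩ : ∃ c : ℂ, ‖c‖ = 1 ∧ c * Z = (‖Z‖ : ℂ) := by
    rcases eq_or_ne Z 0 with h | h
    · exact ⟨1, by simp, by simp [h]⟩
    · refine ⟨(starRingEnd ℂ) Z / ‖Z‖, ?_, ?_⟩
      · rw [norm_div, RCLike.norm_conj, Complex.norm_real, norm_norm,
          div_self (norm_ne_zero_iff.2 h)]
      · rw [div_mul_eq_mul_div, mul_comm, Complex.mul_conj']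
        have hne : (‖Z‖:ℂ) ≠ 0 := Complex.ofReal_ne_zero.mpr (norm_ne_zero_iff.2 h)
        field_simp
  set z : U ⊕ V → EuclideanSpace ℂ (Fin m) :=
    Sum.elim (fun u => y (Sum.inl u)) (fun v => c • y (Sum.inr v)) with hzdef
  have hznorm : ∀ s, ‖z s‖ = ‖y s‖ := by
    rintro (u | v) <;> simp [hzdef, norm_smul, hc1]
  have hzU : ∑ u : U, z (Sum.inl u) = 0 := by simpa [hzdef] using hyU
  have hzV : ∑ v : V, z (Sum.inr v) = 0 := by
    simp only [hzdef, Sum.elim_inr, ← Finset.smul_sum, hyV, smul_zero]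
  have hZre : ‖Z‖ = (∑ e ∈ Γ.E, (inner ℂ (z (Sum.inl e.1)) (z (Sum.inr e.2)) : ℂ)).re := by
    have : ∑ e ∈ Γ.E, (inner ℂ (z (Sum.inl e.1)) (z (Sum.inr e.2)) : ℂ) = c * Z := by
      rw [hZdef, Finset.mul_sum]
      refine Finset.sum_congr rfl fun e _ => ?_
      simp only [hzdef, Sum.elim_inl, Sum.elim_inr]
      rw [inner_smul_right]
    rw [this, hcZ, Complex.ofReal_re]
  -- coordinates
  set f : Fin m → (U ⊕ V) → ℝ := fun k s => (z s k).re with hfdef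
  set g : Fin m → (U ⊕ V) → ℝ := fun k s => (z s k).im with hgdef
  have hinner_re : ∀ e : U × V,
      ((inner ℂ (z (Sum.inl e.1)) (z (Sum.inr e.2)) : ℂ)).re =
        ∑ k : Fin m, (f k (Sum.inl e.1) * f k (Sum.inr e.2)
          + g k (Sum.inl e.1) * g k (Sum.inr e.2)) := by
    intro e
    rw [PiLp.inner_apply, Complex.re_sum]
    refine Finset.sum_congr rfl fun k _ => ?_
    simp only [RCLike.inner_apply, Complex.mul_re, Complex.conj_re, Complex.conj_im,
      hfdef, hgdef]
    ring
  have hnormZ : ‖Z‖ = ∑ k : Fin m,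
      ((∑ e ∈ Γ.E, f k (Sum.inl e.1) * f k (Sum.inr e.2))
        + ∑ e ∈ Γ.E, g k (Sum.inl e.1) * g k (Sum.inr e.2)) := by
    rw [hZre, Complex.re_sum]
    rw [Finset.sum_congr rfl fun e _ => hinner_re e, Finset.sum_comm]
    simp [Finset.sum_add_distrib]
  -- per-coordinate orthogonality
  have hfU : ∀ k, ∑ u : U, f k (Sum.inl u) = 0 := by
    intro k
    have : ((∑ u : U, z (Sum.inl u)) k).re = 0 := by rw [hzU]; simp
    rwa [sum_apply_euclid, Complex.re_sum] at this
  have hfV : ∀ k, ∑ v : V, f k (Sum.inr v) = 0 := by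
    intro k
    have : ((∑ v : V, z (Sum.inr v)) k).re = 0 := by rw [hzV]; simp
    rwa [sum_apply_euclid, Complex.re_sum] at this
  have hgU : ∀ k, ∑ u : U, g k (Sum.inl u) = 0 := by
    intro k
    have : ((∑ u : U, z (Sum.inl u)) k).im = 0 := by rw [hzU]; simp
    rwa [sum_apply_euclid, Complex.im_sum] at this
  have hgV : ∀ k, ∑ v : V, g k (Sum.inr v) = 0 := by
    intro k
    have : ((∑ v : V, z (Sum.inr v)) k).im = 0 := by rw [hzV]; simp
    rwa [sum_apply_euclid, Complex.im_sum] at this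
  have bound : ∀ k : Fin m,
      (∑ e ∈ Γ.E, f k (Sum.inl e.1) * f k (Sum.inr e.2))
        + ∑ e ∈ Γ.E, g k (Sum.inl e.1) * g k (Sum.inr e.2)
      ≤ lam * d / 2 * (∑ s : U ⊕ V, (f k s ^ 2 + g k s ^ 2)) := by
    intro k
    have h1 := scalar_bound Γ hd (f k) (hfU k) (hfV k)
    have h2 := scalar_bound Γ hd (g k) (hgU k) (hgV k)
    calc (∑ e ∈ Γ.E, f k (Sum.inl e.1) * f k (Sum.inr e.2))
          + ∑ e ∈ Γ.E, g k (Sum.inl e.1) * g k (Sum.inr e.2)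
        ≤ |∑ e ∈ Γ.E, f k (Sum.inl e.1) * f k (Sum.inr e.2)|
          + |∑ e ∈ Γ.E, g k (Sum.inl e.1) * g k (Sum.inr e.2)| :=
          add_le_add (le_abs_self _) (le_abs_self _)
      _ ≤ lam * d / 2 * (∑ s : U ⊕ V, f k s ^ 2) + lam * d / 2 * (∑ s : U ⊕ V, g k s ^ 2) :=
          add_le_add h1 h2
      _ = lam * d / 2 * (∑ s : U ⊕ V, (f k s ^ 2 + g k s ^ 2)) := by
          rw [Finset.sum_add_distrib]; ring
  calc ‖Z‖ = ∑ k : Fin m,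
        ((∑ e ∈ Γ.E, f k (Sum.inl e.1) * f k (Sum.inr e.2))
          + ∑ e ∈ Γ.E, g k (Sum.inl e.1) * g k (Sum.inr e.2)) := hnormZ
    _ ≤ ∑ k : Fin m, lam * d / 2 * (∑ s : U ⊕ V, (f k s ^ 2 + g k s ^ 2)) :=
        Finset.sum_le_sum fun k _ => bound k
    _ = lam * d / 2 * ∑ s : U ⊕ V, ∑ k : Fin m, (f k s ^ 2 + g k s ^ 2) := by
        rw [← Finset.mul_sum, Finset.sum_comm]
    _ = lam * d / 2 * ∑ s : U ⊕ V, ‖y s‖ ^ 2 := by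
        congr 1
        refine Finset.sum_congr rfl fun s _ => ?_
        rw [← hznorm s, euclid_sq_norm]

/-- Lemma 11 of the paper: for vectors `x^s` on the vertices of a bipartite
`(n, d, λ)`-expander with side averages of norms `ε_U` and `ε_V`,
`|(1/(nd)) ∑_{(u,v)∈E} ⟨x^u, x^v⟩| ≤ λ((1/(2n))∑_s ‖x^s‖² − ε_U²/2 − ε_V²/2) + ε_U ε_V`. -/
theorem expander_vector_mixing_sloppy {U V : Type*} [Fintype U] [Fintype V]
    [DecidableEq U] [DecidableEq V] {n d : ℕ} {lam : ℝ}
    (Γ : BipartiteExpander U V n d lam) {m : ℕ}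
    (x : U ⊕ V → EuclideanSpace ℂ (Fin m)) {εU εV : ℝ}
    (hU : ‖(n : ℂ)⁻¹ • ∑ u : U, x (Sum.inl u)‖ = εU)
    (hV : ‖(n : ℂ)⁻¹ • ∑ v : V, x (Sum.inr v)‖ = εV) :
    ‖((n * d : ℕ) : ℂ)⁻¹ *
        ∑ e ∈ Γ.E, (inner ℂ (x (Sum.inl e.1)) (x (Sum.inr e.2)) : ℂ)‖ ≤
      lam * ((((2 * n : ℕ) : ℝ)⁻¹ * ∑ s : U ⊕ V, ‖x s‖ ^ 2) - εU ^ 2 / 2 - εV ^ 2 / 2) +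
        εU * εV := by
  rcases Nat.eq_zero_or_pos n with hn | hn
  · -- degenerate case n = 0
    subst hn
    haveI hUe : IsEmpty U := Fintype.card_eq_zero_iff.mp Γ.card_U
    haveI hVe : IsEmpty V := Fintype.card_eq_zero_iff.mp Γ.card_V
    have hE : Γ.E = ∅ := Finset.eq_empty_of_isEmpty _
    have hεU : εU = 0 := by rw [← hU]; simp
    have hεV : εV = 0 := by rw [← hV]; simp
    simp [hE, hεU, hεV]
  rcases Nat.eq_zero_or_pos d with hd | hd
  · -- degenerate case d = 0 : contradicts connectedness
    exfalso
    haveI : Nonempty U := Fintype.card_pos_iff.mp (Γ.card_U ▸ hn)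
    haveI : Nonempty V := Fintype.card_pos_iff.mp (Γ.card_V ▸ hn)
    obtain ⟨u⟩ := ‹Nonempty U›; obtain ⟨v⟩ := ‹Nonempty V›
    have hE : Γ.E = ∅ := by
      rw [Finset.eq_empty_iff_forall_notMem]
      intro e he
      have h1 : e ∈ Γ.E.filter fun e' => e'.1 = e.1 := Finset.mem_filter.2 ⟨he, rfl⟩
      have h2 : (Γ.E.filter fun e' => e'.1 = e.1) = ∅ :=
        Finset.card_eq_zero.mp ((Γ.degU e.1).trans hd)
      exact absurd (h2 ▸ h1) (Finset.notMem_empty _)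
    have hcon := Γ.connected (Sum.inl u) (Sum.inr v)
    rcases hcon.cases_head with h | ⟨c, ⟨e, he, _⟩, _⟩
    · exact absurd h (by simp)
    · rw [hE] at he; exact absurd he (Finset.notMem_empty _)
  -- main case
  have hn' : (n : ℝ) ≠ 0 := Nat.cast_ne_zero.mpr hn.ne'
  have hd' : (d : ℝ) ≠ 0 := Nat.cast_ne_zero.mpr hd.ne'
  have hnC : (n : ℂ) ≠ 0 := Nat.cast_ne_zero.mpr hn.ne'
  set μU : EuclideanSpace ℂ (Fin m) := (n : ℂ)⁻¹ • ∑ u : U, x (Sum.inl u) with hμU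
  set μV : EuclideanSpace ℂ (Fin m) := (n : ℂ)⁻¹ • ∑ v : V, x (Sum.inr v) with hμV
  have hsumU : ∑ u : U, x (Sum.inl u) = (n : ℂ) • μU := by
    rw [hμU, smul_smul, mul_inv_cancel₀ hnC, one_smul]
  have hsumV : ∑ v : V, x (Sum.inr v) = (n : ℂ) • μV := by
    rw [hμV, smul_smul, mul_inv_cancel₀ hnC, one_smul]
  set y : U ⊕ V → EuclideanSpace ℂ (Fin m) :=
    fun s => x s - Sum.elim (fun _ => μU) (fun _ => μV) s with hydef
  have hyU : ∑ u : U, y (Sum.inl u) = 0 := by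
    simp only [hydef, Sum.elim_inl, Finset.sum_sub_distrib, Finset.sum_const,
      Finset.card_univ, Γ.card_U, hsumU, sub_eq_zero]
    rw [Nat.cast_smul_eq_nsmul]
  have hyV : ∑ v : V, y (Sum.inr v) = 0 := by
    simp only [hydef, Sum.elim_inr, Finset.sum_sub_distrib, Finset.sum_const,
      Finset.card_univ, Γ.card_V, hsumV, sub_eq_zero]
    rw [Nat.cast_smul_eq_nsmul]
  -- edge count
  have hEcard : Γ.E.card = n * d := by
    rw [Finset.card_eq_sum_card_fiberwise (f := fun e => e.1) (t := Finset.univ)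
      (fun e _ => Finset.mem_univ _)]
    simp [Γ.degU, Finset.card_univ, Γ.card_U]
  -- edge sums of y vanish
  have hEyU : ∑ e ∈ Γ.E, y (Sum.inl e.1) = 0 := by
    rw [← Finset.sum_fiberwise' Γ.E (fun e => e.1) (fun u => y (Sum.inl u))]
    have : ∀ u : U, ∑ e ∈ Γ.E.filter fun e => e.1 = u, y (Sum.inl u) = (d : ℕ) • y (Sum.inl u) := by
      intro u; rw [Finset.sum_const, Γ.degU]
    rw [Finset.sum_congr rfl fun u _ => this u, ← Finset.smul_sum, hyU, smul_zero]
  have hEyV : ∑ e ∈ Γ.E, y (Sum.inr e.2) = 0 := by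
    rw [← Finset.sum_fiberwise' Γ.E (fun e => e.2) (fun v => y (Sum.inr v))]
    have : ∀ v : V, ∑ e ∈ Γ.E.filter fun e => e.2 = v, y (Sum.inr v) = (d : ℕ) • y (Sum.inr v) := by
      intro v; rw [Finset.sum_const, Γ.degV]
    rw [Finset.sum_congr rfl fun v _ => this v, ← Finset.smul_sum, hyV, smul_zero]
  -- decomposition of the edge inner-product sum
  have hx : ∀ s, x s = y s + Sum.elim (fun _ => μU) (fun _ => μV) s := by
    intro s; simp [hydef]
  have hdecomp : ∑ e ∈ Γ.E, (inner ℂ (x (Sum.inl e.1)) (x (Sum.inr e.2)) : ℂ)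
      = (∑ e ∈ Γ.E, (inner ℂ (y (Sum.inl e.1)) (y (Sum.inr e.2)) : ℂ))
        + ((n * d : ℕ) : ℂ) * (inner ℂ μU μV : ℂ) := by
    have expand : ∀ e : U × V, (inner ℂ (x (Sum.inl e.1)) (x (Sum.inr e.2)) : ℂ)
        = (inner ℂ (y (Sum.inl e.1)) (y (Sum.inr e.2)) : ℂ)
          + (inner ℂ (y (Sum.inl e.1)) μV : ℂ)
          + (inner ℂ μU (y (Sum.inr e.2)) : ℂ) + (inner ℂ μU μV : ℂ) := by
      intro e
      rw [hx (Sum.inl e.1), hx (Sum.inr e.2)]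
      simp only [Sum.elim_inl, Sum.elim_inr, inner_add_left, inner_add_right]
      ring
    rw [Finset.sum_congr rfl fun e _ => expand e]
    simp only [Finset.sum_add_distrib]
    rw [← sum_inner, hEyU, ← inner_sum, hEyV]
    simp only [inner_zero_left, inner_zero_right, add_zero, zero_add]
    rw [Finset.sum_const, hEcard, nsmul_eq_mul]
  -- norms
  have hndC : ‖((n * d : ℕ) : ℂ)⁻¹‖ = ((n * d : ℕ) : ℝ)⁻¹ := by
    rw [norm_inv, Complex.norm_natCast]
  have hnd0 : ((n * d : ℕ) : ℂ) ≠ 0 :=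
    Nat.cast_ne_zero.mpr (Nat.mul_ne_zero hn.ne' hd.ne')
  have hip : ‖(inner ℂ μU μV : ℂ)‖ ≤ εU * εV := by
    rw [← hU, ← hV]; exact norm_inner_le_norm μU μV
  have hvb := vector_bound Γ hd y hyU hyV
  -- sum of squared norms of y
  have hyUsq : ∑ u : U, ‖y (Sum.inl u)‖ ^ 2 = (∑ u : U, ‖x (Sum.inl u)‖ ^ 2) - n * εU ^ 2 := by
    have : ∀ u : U, ‖y (Sum.inl u)‖ ^ 2
        = ‖x (Sum.inl u)‖ ^ 2 - 2 * Complex.re (inner ℂ (x (Sum.inl u)) μU : ℂ) + ‖μU‖ ^ 2 := by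
      intro u
      simp only [hydef, Sum.elim_inl]
      exact norm_sub_sq (𝕜 := ℂ) _ _
    have hinner : ∑ u : U, (inner ℂ (x (Sum.inl u)) μU : ℂ).re = n * εU ^ 2 := by
      rw [← Complex.re_sum, ← sum_inner, hsumU, inner_smul_left,
        inner_self_eq_norm_sq_to_K, hU, Complex.conj_natCast]
      norm_cast
      simp [Complex.mul_re, ← Complex.ofReal_pow]
    rw [Finset.sum_congr rfl fun u _ => this u]
    rw [Finset.sum_add_distrib, Finset.sum_sub_distrib, ← Finset.mul_sum, hinner,
      Finset.sum_const, Finset.card_univ, Γ.card_U, nsmul_eq_mul, hU]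
    ring
  have hyVsq : ∑ v : V, ‖y (Sum.inr v)‖ ^ 2 = (∑ v : V, ‖x (Sum.inr v)‖ ^ 2) - n * εV ^ 2 := by
    have : ∀ v : V, ‖y (Sum.inr v)‖ ^ 2
        = ‖x (Sum.inr v)‖ ^ 2 - 2 * Complex.re (inner ℂ (x (Sum.inr v)) μV : ℂ) + ‖μV‖ ^ 2 := by
      intro v
      simp only [hydef, Sum.elim_inr]
      exact norm_sub_sq (𝕜 := ℂ) _ _
    have hinner : ∑ v : V, (inner ℂ (x (Sum.inr v)) μV : ℂ).re = n * εV ^ 2 := by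
      rw [← Complex.re_sum, ← sum_inner, hsumV, inner_smul_left,
        inner_self_eq_norm_sq_to_K, hV, Complex.conj_natCast]
      norm_cast
      simp [Complex.mul_re, ← Complex.ofReal_pow]
    rw [Finset.sum_congr rfl fun v _ => this v]
    rw [Finset.sum_add_distrib, Finset.sum_sub_distrib, ← Finset.mul_sum, hinner,
      Finset.sum_const, Finset.card_univ, Γ.card_V, nsmul_eq_mul, hV]
    ring
  have hysq : ∑ s : U ⊕ V, ‖y s‖ ^ 2
      = (∑ s : U ⊕ V, ‖x s‖ ^ 2) - n * εU ^ 2 - n * εV ^ 2 := by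
    rw [Fintype.sum_sum_type, Fintype.sum_sum_type (f := fun s => ‖x s‖ ^ 2), hyUsq, hyVsq]
    ring
  -- put it together
  calc ‖((n * d : ℕ) : ℂ)⁻¹ * ∑ e ∈ Γ.E, (inner ℂ (x (Sum.inl e.1)) (x (Sum.inr e.2)) : ℂ)‖
      = ‖((n * d : ℕ) : ℂ)⁻¹ * (∑ e ∈ Γ.E, (inner ℂ (y (Sum.inl e.1)) (y (Sum.inr e.2)) : ℂ))
          + (inner ℂ μU μV : ℂ)‖ := by
        rw [hdecomp, mul_add, inv_mul_cancel_left₀ hnd0]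
    _ ≤ ‖((n * d : ℕ) : ℂ)⁻¹ * (∑ e ∈ Γ.E, (inner ℂ (y (Sum.inl e.1)) (y (Sum.inr e.2)) : ℂ))‖
          + ‖(inner ℂ μU μV : ℂ)‖ := norm_add_le _ _
    _ ≤ ((n * d : ℕ) : ℝ)⁻¹ * (lam * d / 2 * ∑ s : U ⊕ V, ‖y s‖ ^ 2) + εU * εV := by
        refine add_le_add ?_ hip
        rw [norm_mul, hndC]
        exact mul_le_mul_of_nonneg_left hvb (by positivity)
    _ = lam * ((((2 * n : ℕ) : ℝ)⁻¹ * ∑ s : U ⊕ V, ‖x s‖ ^ 2) - εU ^ 2 / 2 - εV ^ 2 / 2)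
          + εU * εV := by
        rw [hysq]
        push_cast
        field_simp
end

section
/- Let X_0, X_1, …, X_T be real-valued random variables adapted to a filtration F_0 ⊆ F_1 ⊆ ⋯ ⊆ F_T, and let α_1, …, α_T and ε_1, …, ε_T be reals with 0 ≤ ε_i ≤ α_i ≤ 1 for each i. Suppose that almost surely X_{i−1} − α_i ≤ X_i ≤ X_{i−1} for each 1 ≤ i ≤ T, and that E[X_i | F_{i−1}] ≤ X_{i−1} − ε_i almost surely for each 1 ≤ i ≤ T. Then for every λ ≥ 0, Pr[ X_T − X_0 ≥ −Σ_{i=1}^T ε_i + λ ] ≤ exp( −λ² / (2 Σ_{i=1}^T α_i) ). -/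
open scoped BigOperators
open MeasureTheory

/-- Auxiliary: `1 ≤ (1 - y + y²/2) * exp y` for `y ≥ 0`. -/
lemma aux_one_le {y : ℝ} (hy : 0 ≤ y) : 1 ≤ (1 - y + y ^ 2 / 2) * Real.exp y := by
  set f : ℝ → ℝ := fun y => (1 - y + y ^ 2 / 2) * Real.exp y with hf
  have hderiv : ∀ x : ℝ, HasDerivAt f (x ^ 2 / 2 * Real.exp x) x := by
    intro x
    have h1 : HasDerivAt (fun y : ℝ => 1 - y + y ^ 2 / 2) (-1 + x) x := by
      have : HasDerivAt (fun y : ℝ => 1 - y + y ^ 2 / 2) (0 - 1 + 2 * x ^ 1 / 2) x := by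
        exact (((hasDerivAt_const x (1:ℝ)).sub (hasDerivAt_id x)).add
          ((hasDerivAt_pow 2 x).div_const 2))
      simpa using this.congr_deriv (by ring)
    have := h1.mul (Real.hasDerivAt_exp x)
    exact this.congr_deriv (by ring)
  have hmono : MonotoneOn f (Set.Ici (0:ℝ)) := by
    apply monotoneOn_of_deriv_nonneg (convex_Ici 0)
      (fun x _ => (hderiv x).continuousAt.continuousWithinAt)
      (fun x _ => ((hderiv x).differentiableAt).differentiableWithinAt)
    intro x hx
    rw [(hderiv x).deriv]
    have hx0 : (0:ℝ) < x := by simpa [interior_Ici] using hx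
    positivity
  have h0 : f 0 = 1 := by simp [hf]
  have := hmono (Set.self_mem_Ici) hy hy
  rw [h0] at this
  exact this

/-- Auxiliary: `exp x ≤ 1 + x + x²/2` for `x ≤ 0`. -/
lemma exp_le_quadratic {x : ℝ} (hx : x ≤ 0) : Real.exp x ≤ 1 + x + x ^ 2 / 2 := by
  have h := aux_one_le (y := -x) (by linarith)
  have hmul : Real.exp x * Real.exp (-x) = 1 := by rw [← Real.exp_add]; simp
  nlinarith [Real.exp_pos x, Real.exp_pos (-x), h, hmul]

/-- Corollary 14 of the paper, a drifted one-sided Azuma inequality: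
for an adapted sequence with nonpositive increments bounded below by `−αᵢ` and conditional
drift at most `−εᵢ`, `Pr[X_T − X_0 ≥ −∑εᵢ + λ] ≤ exp(−λ²/(2∑αᵢ))`. -/
theorem azuma_with_drift {Ω : Type*} {mΩ : MeasurableSpace Ω} {μ : Measure Ω}
    [IsProbabilityMeasure μ] (ℱ : Filtration ℕ mΩ) (X : ℕ → Ω → ℝ) (T : ℕ)
    (hadp : Adapted ℱ X) (hint : ∀ i, Integrable (X i) μ) (α ε : ℕ → ℝ)
    (hε0 : ∀ i ∈ Finset.Icc 1 T, 0 ≤ ε i)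
    (hεα : ∀ i ∈ Finset.Icc 1 T, ε i ≤ α i)
    (hα1 : ∀ i ∈ Finset.Icc 1 T, α i ≤ 1)
    (hαpos : 0 < ∑ i ∈ Finset.Icc 1 T, α i)
    (hbdd : ∀ i ∈ Finset.Icc 1 T, ∀ᵐ ω ∂μ,
      X (i - 1) ω - α i ≤ X i ω ∧ X i ω ≤ X (i - 1) ω)
    (hcond : ∀ i ∈ Finset.Icc 1 T,
      μ[X i | ℱ (i - 1)] ≤ᵐ[μ] fun ω => X (i - 1) ω - ε i)
    (lam : ℝ) (hlam : 0 ≤ lam) :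
    μ {ω | -(∑ i ∈ Finset.Icc 1 T, ε i) + lam ≤ X T ω - X 0 ω} ≤
      ENNReal.ofReal (Real.exp (-lam ^ 2 / (2 * ∑ i ∈ Finset.Icc 1 T, α i))) := by
  set S := ∑ i ∈ Finset.Icc 1 T, α i with hS
  set t := lam / S with ht
  have ht0 : 0 ≤ t := div_nonneg hlam hαpos.le
  have hα0 : ∀ i ∈ Finset.Icc 1 T, 0 ≤ α i := fun i hi => (hε0 i hi).trans (hεα i hi)
  -- measurability helpers
  have hXm : ∀ n, StronglyMeasurable (X n) := fun n => ((hadp n).mono (ℱ.le n) le_rfl).stronglyMeasurable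
  have hexpm : ∀ n m : ℕ, AEStronglyMeasurable (fun ω => Real.exp (t * (X n ω - X m ω))) μ :=
    fun n m => (Real.continuous_exp.comp_stronglyMeasurable
      (((hXm n).sub (hXm m)).const_mul t)).aestronglyMeasurable
  -- chain bound : X n ≤ X 0 a.e. for n ≤ T
  have hle : ∀ n, n ≤ T → ∀ᵐ ω ∂μ, X n ω ≤ X 0 ω := by
    intro n
    induction n with
    | zero => intro _; filter_upwards with ω; exact le_rfl
    | succ k ih =>
      intro hkT
      have hk : k + 1 ∈ Finset.Icc 1 T := Finset.mem_Icc.mpr ⟨by omega, hkT⟩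
      filter_upwards [hbdd (k+1) hk, ih (by omega)] with ω h1 h2
      simpa using h1.2.trans h2
  -- integrability of the exponentials
  have hgint : ∀ n m : ℕ, (∀ᵐ ω ∂μ, X n ω ≤ X m ω) →
      Integrable (fun ω => Real.exp (t * (X n ω - X m ω))) μ := by
    intro n m hnm
    refine Integrable.mono' (integrable_const (1:ℝ)) (hexpm n m) ?_
    filter_upwards [hnm] with ω h
    rw [Real.norm_eq_abs, abs_of_pos (Real.exp_pos _)]
    rw [Real.exp_le_one_iff]
    have : X n ω - X m ω ≤ 0 := by linarith
    exact mul_nonpos_of_nonneg_of_nonpos ht0 this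
  -- key per-step conditional bound
  have key : ∀ i ∈ Finset.Icc 1 T,
      μ[(fun ω => Real.exp (t * (X i ω - X (i-1) ω))) | ℱ (i-1)] ≤ᵐ[μ]
        fun _ => Real.exp (t ^ 2 * α i / 2 - t * ε i) := by
    intro i hi
    have hαi0 := hα0 i hi
    have hαi1 := hα1 i hi
    have hεi0 := hε0 i hi
    have hεiα := hεα i hi
    have hDi : Integrable (fun ω => X i ω - X (i-1) ω) μ := (hint i).sub (hint (i-1))
    have hgi : Integrable (fun ω => Real.exp (t * (X i ω - X (i-1) ω))) μ := by
      apply hgint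
      filter_upwards [hbdd i hi] with ω h; exact h.2
    set c0 : ℝ := 1 + t ^ 2 * α i ^ 2 / 2 with hc0
    have hhint : Integrable (fun ω => c0 + t * (X i ω - X (i-1) ω)) μ :=
      (integrable_const c0).add (hDi.const_mul t)
    have step1 : (fun ω => Real.exp (t * (X i ω - X (i-1) ω))) ≤ᵐ[μ]
        fun ω => c0 + t * (X i ω - X (i-1) ω) := by
      filter_upwards [hbdd i hi] with ω h
      have hx : t * (X i ω - X (i-1) ω) ≤ 0 :=
        mul_nonpos_of_nonneg_of_nonpos ht0 (by linarith [h.2])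
      have := exp_le_quadratic hx
      have hD2 : (X i ω - X (i-1) ω) ^ 2 ≤ α i ^ 2 := by
        nlinarith [mul_nonneg (show (0:ℝ) ≤ α i + (X i ω - X (i-1) ω) by linarith [h.1])
          (show (0:ℝ) ≤ α i - (X i ω - X (i-1) ω) by linarith [h.2, hαi0])]
      have hsq : (t * (X i ω - X (i-1) ω)) ^ 2 ≤ t ^ 2 * α i ^ 2 := by
        rw [mul_pow]; exact mul_le_mul_of_nonneg_left hD2 (sq_nonneg t)
      rw [hc0]
      nlinarith [this]
    have step2 := condExp_mono (m := ℱ (i-1)) hgi hhint step1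
    -- compute condexp of the affine function
    have e0 : (fun ω => c0 + t * (X i ω - X (i-1) ω)) =
        (fun _ => c0) + t • (fun ω => X i ω - X (i-1) ω) := by
      funext ω; simp [smul_eq_mul]
    have e1 : μ[(fun ω => c0 + t * (X i ω - X (i-1) ω)) | ℱ (i-1)] =ᵐ[μ]
        (fun _ => c0) + t • ((μ[X i | ℱ (i-1)]) - X (i-1)) := by
      rw [e0]
      refine (condExp_add (integrable_const c0) (hDi.smul t) (ℱ (i-1))).trans ?_
      have h1 : μ[(fun _ => c0) | ℱ (i-1)] = fun _ => c0 := condExp_const (ℱ.le (i-1)) c0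
      have h2 : μ[t • (fun ω => X i ω - X (i-1) ω) | ℱ (i-1)] =ᵐ[μ]
          t • μ[(fun ω => X i ω - X (i-1) ω) | ℱ (i-1)] := condExp_smul t _ (ℱ (i-1))
      have h3 : μ[(fun ω => X i ω - X (i-1) ω) | ℱ (i-1)] =ᵐ[μ]
          μ[X i | ℱ (i-1)] - μ[X (i-1) | ℱ (i-1)] := condExp_sub (hint i) (hint (i-1)) (ℱ (i-1))
      have h4 : μ[X (i-1) | ℱ (i-1)] = X (i-1) :=
        condExp_of_stronglyMeasurable (ℱ.le (i-1)) (hadp (i-1)).stronglyMeasurable (hint (i-1))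
      rw [h1]
      filter_upwards [h2, h3] with ω hω2 hω3
      simp only [Pi.add_apply, Pi.smul_apply, Pi.sub_apply, smul_eq_mul] at *
      rw [hω2, hω3, h4]
    have step3 : ((fun _ => c0) + t • ((μ[X i | ℱ (i-1)]) - X (i-1)) : Ω → ℝ) ≤ᵐ[μ]
        fun _ => Real.exp (t ^ 2 * α i / 2 - t * ε i) := by
      filter_upwards [hcond i hi] with ω hc
      simp only [Pi.add_apply, Pi.smul_apply, Pi.sub_apply, smul_eq_mul]
      have h5 : t * ((μ[X i | ℱ (i-1)]) ω - X (i-1) ω) ≤ t * (-ε i) := by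
        apply mul_le_mul_of_nonneg_left _ ht0
        have := hc
        linarith
      have h6 : c0 + t * (-ε i) = 1 + (t ^ 2 * α i ^ 2 / 2 - t * ε i) := by rw [hc0]; ring
      have h8 : t ^ 2 * α i ^ 2 / 2 - t * ε i ≤ t ^ 2 * α i / 2 - t * ε i := by
        nlinarith [mul_nonneg (sq_nonneg t) (mul_nonneg hαi0 (sub_nonneg.2 hαi1))]
      calc c0 + t * ((μ[X i | ℱ (i-1)]) ω - X (i-1) ω) ≤ c0 + t * (-ε i) := by linarith
        _ ≤ Real.exp (t ^ 2 * α i ^ 2 / 2 - t * ε i) := by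
            rw [h6]; linarith [Real.add_one_le_exp (t ^ 2 * α i ^ 2 / 2 - t * ε i)]
        _ ≤ Real.exp (t ^ 2 * α i / 2 - t * ε i) := Real.exp_le_exp.2 h8
    exact step2.trans (e1.trans_le step3)
  -- main induction
  have main : ∀ n, n ≤ T →
      ∫ ω, Real.exp (t * (X n ω - X 0 ω)) ∂μ ≤
        Real.exp (∑ i ∈ Finset.Icc 1 n, (t ^ 2 * α i / 2 - t * ε i)) := by
    intro n
    induction n with
    | zero => intro _; simp
    | succ k ih =>
      intro hkT
      have hk : k + 1 ∈ Finset.Icc 1 T := Finset.mem_Icc.mpr ⟨by omega, hkT⟩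
      have hkey := key (k+1) hk
      simp only [Nat.add_sub_cancel] at hkey
      set f : Ω → ℝ := fun ω => Real.exp (t * (X k ω - X 0 ω)) with hf
      set g : Ω → ℝ := fun ω => Real.exp (t * (X (k+1) ω - X k ω)) with hg
      have hfg : (fun ω => Real.exp (t * (X (k+1) ω - X 0 ω))) = f * g := by
        funext ω
        simp only [hf, hg, Pi.mul_apply, ← Real.exp_add]
        ring_nf
      have hfm : StronglyMeasurable[ℱ k] f :=
        Real.continuous_exp.comp_stronglyMeasurable
          (((hadp k).sub ((hadp 0).mono (ℱ.mono (Nat.zero_le k)) le_rfl)).const_mul t).stronglyMeasurable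
      have hfint : Integrable f μ := hgint k 0 (hle k (by omega))
      have hgi : Integrable g μ := by
        apply hgint
        filter_upwards [hbdd (k+1) hk] with ω h
        simpa using h.2
      have hfgint : Integrable (f * g) μ := by
        rw [← hfg]; exact hgint (k+1) 0 (hle (k+1) hkT)
      have hpull := condExp_mul_of_stronglyMeasurable_left hfm hfgint hgi
      have hint1 : Integrable (f * μ[g | ℱ k]) μ :=
        (integrable_condExp).congr hpull
      have hint2 : Integrable (fun ω => f ω * Real.exp (t ^ 2 * α (k+1) / 2 - t * ε (k+1))) μ :=
        hfint.mul_const _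
      calc ∫ ω, Real.exp (t * (X (k+1) ω - X 0 ω)) ∂μ
          = ∫ ω, (f * g) ω ∂μ := by rw [hfg]
        _ = ∫ ω, (μ[f * g | ℱ k]) ω ∂μ := (integral_condExp (ℱ.le k)).symm
        _ = ∫ ω, (f * μ[g | ℱ k]) ω ∂μ := integral_congr_ae hpull
        _ ≤ ∫ ω, f ω * Real.exp (t ^ 2 * α (k+1) / 2 - t * ε (k+1)) ∂μ := by
            refine integral_mono_ae hint1 hint2 ?_
            filter_upwards [hkey] with ω hω
            simp only [Pi.mul_apply]
            exact mul_le_mul_of_nonneg_left hω (Real.exp_nonneg _)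
        _ = (∫ ω, f ω ∂μ) * Real.exp (t ^ 2 * α (k+1) / 2 - t * ε (k+1)) := by
            rw [integral_mul_const]
        _ ≤ Real.exp (∑ i ∈ Finset.Icc 1 k, (t ^ 2 * α i / 2 - t * ε i)) *
              Real.exp (t ^ 2 * α (k+1) / 2 - t * ε (k+1)) := by
            apply mul_le_mul_of_nonneg_right (ih (by omega)) (Real.exp_nonneg _)
        _ = Real.exp (∑ i ∈ Finset.Icc 1 (k+1), (t ^ 2 * α i / 2 - t * ε i)) := by
            rw [← Real.exp_add, Finset.sum_Icc_succ_top (by omega : 1 ≤ k + 1)]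
  -- Chernoff bound
  have hTmain := main T le_rfl
  have hintT : Integrable (fun ω => Real.exp (t * (X T ω - X 0 ω))) μ :=
    hgint T 0 (hle T le_rfl)
  have hchern := ProbabilityTheory.measure_ge_le_exp_mul_mgf
    (X := fun ω => X T ω - X 0 ω) (μ := μ) (t := t)
    (-(∑ i ∈ Finset.Icc 1 T, ε i) + lam) ht0 hintT
  have hmgf : ProbabilityTheory.mgf (fun ω => X T ω - X 0 ω) μ t =
      ∫ ω, Real.exp (t * (X T ω - X 0 ω)) ∂μ := rfl
  have hsum : ∑ i ∈ Finset.Icc 1 T, (t ^ 2 * α i / 2 - t * ε i) =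
      t ^ 2 * S / 2 - t * ∑ i ∈ Finset.Icc 1 T, ε i := by
    have hc : ∀ i ∈ Finset.Icc 1 T, t ^ 2 * α i / 2 - t * ε i = t ^ 2 / 2 * α i - t * ε i :=
      fun i _ => by ring
    rw [Finset.sum_congr rfl hc, Finset.sum_sub_distrib, ← Finset.mul_sum, ← Finset.mul_sum, ← hS]
    ring
  have hbound : Real.exp (-t * (-(∑ i ∈ Finset.Icc 1 T, ε i) + lam)) *
      ProbabilityTheory.mgf (fun ω => X T ω - X 0 ω) μ t ≤
      Real.exp (-lam ^ 2 / (2 * S)) := by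
    rw [hmgf]
    calc Real.exp (-t * (-(∑ i ∈ Finset.Icc 1 T, ε i) + lam)) *
          ∫ ω, Real.exp (t * (X T ω - X 0 ω)) ∂μ
        ≤ Real.exp (-t * (-(∑ i ∈ Finset.Icc 1 T, ε i) + lam)) *
            Real.exp (t ^ 2 * S / 2 - t * ∑ i ∈ Finset.Icc 1 T, ε i) := by
          apply mul_le_mul_of_nonneg_left _ (Real.exp_nonneg _)
          rw [← hsum]; exact hTmain
      _ = Real.exp (t ^ 2 * S / 2 - t * lam) := by
          rw [← Real.exp_add]; congr 1; ring
      _ = Real.exp (-lam ^ 2 / (2 * S)) := by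
          congr 1
          rw [ht]
          field_simp
          ring
  have hfin : μ {ω | -(∑ i ∈ Finset.Icc 1 T, ε i) + lam ≤ X T ω - X 0 ω} ≠ ⊤ :=
    measure_ne_top μ _
  rw [← ENNReal.ofReal_toReal hfin]
  exact ENNReal.ofReal_le_ofReal (hchern.trans hbound)
end

section
/- Let P_1, …, P_k be independent random variables taking values in the cone of positive semidefinite operators on an n-dimensional complex Hilbert space H, such that almost surely ‖P_i‖ ≤ 1 for each i, and such that ‖E[P_i]‖ ≤ 1 − δ for each i, where 0 ≤ δ ≤ 1 and ‖·‖ denotes the operator norm. Then for every unit vector v ∈ H and every Δ ≥ 0, Pr[ ‖P_k P_{k−1} ⋯ P_1 v‖ ≥ exp(−kδ/2 + Δ) ] ≤ exp( −Δ² / (2k ln 2) ). -/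
open scoped BigOperators
open MeasureTheory ProbabilityTheory
open scoped ComplexOrder

/-- Matrices carry the product measurable structure (entrywise). -/
noncomputable instance matrixMeasurableSpace {m n : Type*} : MeasurableSpace (Matrix m n ℂ) :=
  inferInstanceAs (MeasurableSpace (m → n → ℂ))

/-- The entrywise expectation of a matrix-valued random variable. -/
noncomputable def matExp {Ω : Type*} [MeasurableSpace Ω] (μ : Measure Ω) {m n : Type*}
    (P : Ω → Matrix m n ℂ) : Matrix m n ℂ :=
  Matrix.of fun a b => ∫ ω, P ω a b ∂μ

/-- The reversed product `P_{k-1} P_{k-2} ⋯ P_0` of a `Fin k`-indexed family of matrices. -/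
noncomputable def revProd {k n : ℕ} (P : Fin k → Matrix (Fin n) (Fin n) ℂ) : Matrix (Fin n) (Fin n) ℂ :=
  (List.ofFn fun j : Fin k => P (Fin.rev j)).prod


namespace OpProdAux
open Matrix
variable {n : ℕ}

lemma apply_coord (M : Matrix (Fin n) (Fin n) ℂ) (x : EuclideanSpace ℂ (Fin n)) (a : Fin n) :
    (Matrix.toEuclideanCLM (𝕜 := ℂ) M x) a = ∑ b, M a b * x b := rfl

lemma normsq_eq (x : EuclideanSpace ℂ (Fin n)) : ‖x‖ ^ 2 = ∑ a, ‖x a‖ ^ 2 := by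
  rw [EuclideanSpace.norm_eq, Real.sq_sqrt]
  positivity

lemma coord_le_norm (x : EuclideanSpace ℂ (Fin n)) (a : Fin n) : ‖x a‖ ≤ ‖x‖ := by
  have h1 : ‖x a‖ ^ 2 ≤ ‖x‖ ^ 2 := by
    rw [normsq_eq]
    exact Finset.single_le_sum (f := fun a => ‖x a‖ ^ 2) (fun i _ => by positivity) (Finset.mem_univ a)
  nlinarith [norm_nonneg (x a), norm_nonneg x]

lemma matOpNorm_nonneg (M : Matrix (Fin n) (Fin n) ℂ) : 0 ≤ matOpNorm M := norm_nonneg _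

lemma matOpNorm_one_le : matOpNorm (1 : Matrix (Fin n) (Fin n) ℂ) ≤ 1 := by
  rw [matOpNorm, _root_.map_one]
  exact ContinuousLinearMap.norm_id_le

lemma matOpNorm_mul_le (A B : Matrix (Fin n) (Fin n) ℂ) :
    matOpNorm (A * B) ≤ matOpNorm A * matOpNorm B := by
  rw [matOpNorm, _root_.map_mul]
  exact norm_mul_le _ _

lemma norm_apply_le (M : Matrix (Fin n) (Fin n) ℂ) (x : EuclideanSpace ℂ (Fin n)) :
    ‖Matrix.toEuclideanCLM (𝕜 := ℂ) M x‖ ≤ matOpNorm M * ‖x‖ :=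
  ContinuousLinearMap.le_opNorm _ _

lemma entry_le (M : Matrix (Fin n) (Fin n) ℂ) (a b : Fin n) : ‖M a b‖ ≤ matOpNorm M := by
  have h : M a b = (Matrix.toEuclideanCLM (𝕜 := ℂ) M (EuclideanSpace.single b 1)) a := by
    rw [apply_coord]
    simp [EuclideanSpace.single_apply]
  rw [h]
  calc ‖(Matrix.toEuclideanCLM (𝕜 := ℂ) M (EuclideanSpace.single b 1)) a‖
      ≤ ‖Matrix.toEuclideanCLM (𝕜 := ℂ) M (EuclideanSpace.single b 1)‖ :=
        coord_le_norm _ a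
    _ ≤ matOpNorm M * ‖EuclideanSpace.single b (1:ℂ)‖ := norm_apply_le _ _
    _ ≤ matOpNorm M * 1 := by
        rw [EuclideanSpace.norm_single]
        simp
    _ = matOpNorm M := mul_one _

lemma inner_toCLM (M : Matrix (Fin n) (Fin n) ℂ) (x : EuclideanSpace ℂ (Fin n)) :
    (inner ℂ x (Matrix.toEuclideanCLM (𝕜 := ℂ) M x) : ℂ)
      = dotProduct (star (x : Fin n → ℂ)) (M *ᵥ (x : Fin n → ℂ)) := by
  simp [PiLp.inner_apply, RCLike.inner_apply, dotProduct, Matrix.mulVec]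
  exact Finset.sum_congr rfl fun _ _ => mul_comm _ _

lemma re_inner_le (M : Matrix (Fin n) (Fin n) ℂ) (x : EuclideanSpace ℂ (Fin n)) :
    Complex.re (inner ℂ x (Matrix.toEuclideanCLM (𝕜 := ℂ) M x)) ≤ matOpNorm M * ‖x‖ ^ 2 := by
  have h1 : Complex.re (inner ℂ x (Matrix.toEuclideanCLM (𝕜 := ℂ) M x))
      ≤ ‖(inner ℂ x (Matrix.toEuclideanCLM (𝕜 := ℂ) M x) : ℂ)‖ := Complex.re_le_norm _
  refine h1.trans ?_
  calc ‖(inner ℂ x (Matrix.toEuclideanCLM (𝕜 := ℂ) M x) : ℂ)‖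
      ≤ ‖x‖ * ‖Matrix.toEuclideanCLM (𝕜 := ℂ) M x‖ := norm_inner_le_norm _ _
    _ ≤ ‖x‖ * (matOpNorm M * ‖x‖) := by
        gcongr; exact ContinuousLinearMap.le_opNorm _ _
    _ = matOpNorm M * ‖x‖ ^ 2 := by ring

lemma psd_inner_nonneg {M : Matrix (Fin n) (Fin n) ℂ} (hM : M.PosSemidef)
    (x : EuclideanSpace ℂ (Fin n)) : 0 ≤ (inner ℂ x (Matrix.toEuclideanCLM (𝕜 := ℂ) M x) : ℂ) := by
  rw [inner_toCLM]; exact hM.dotProduct_mulVec_nonneg _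

lemma one_sub_psd {M : Matrix (Fin n) (Fin n) ℂ} (hM : M.PosSemidef)
    (hMn : matOpNorm M ≤ 1) : ((1 : Matrix (Fin n) (Fin n) ℂ) - M).PosSemidef := by
  refine Matrix.PosSemidef.of_dotProduct_mulVec_nonneg ?_ ?_
  · exact Matrix.isHermitian_one.sub hM.1
  · intro x
    set x' : EuclideanSpace ℂ (Fin n) := (WithLp.equiv 2 (Fin n → ℂ)).symm x with hx'
    have hcoe : (x' : Fin n → ℂ) = x := rfl
    have h1 : star x ⬝ᵥ ((1 - M) *ᵥ x) = star x ⬝ᵥ x - star x ⬝ᵥ (M *ᵥ x) := by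
      rw [Matrix.sub_mulVec, dotProduct_sub, Matrix.one_mulVec]
    have hMx : star x ⬝ᵥ (M *ᵥ x) = (inner ℂ x' (Matrix.toEuclideanCLM (𝕜 := ℂ) M x') : ℂ) := by
      rw [inner_toCLM, hcoe]
    have hid : star x ⬝ᵥ x = ((‖x'‖ ^ 2 : ℝ) : ℂ) := by
      have h0 : (inner ℂ x' x' : ℂ) = star x ⬝ᵥ x := by
        simp only [PiLp.inner_apply, RCLike.inner_apply, dotProduct, Pi.star_apply]
        exact Finset.sum_congr rfl fun _ _ => mul_comm _ _
      rw [← h0, inner_self_eq_norm_sq_to_K]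
      norm_cast
    have hnn := hM.dotProduct_mulVec_nonneg x
    have him : Complex.im (star x ⬝ᵥ (M *ᵥ x)) = 0 := by
      rw [Complex.nonneg_iff] at hnn; exact hnn.2.symm
    have hre : Complex.re (star x ⬝ᵥ (M *ᵥ x)) ≤ ‖x'‖ ^ 2 := by
      rw [hMx]
      calc Complex.re (inner ℂ x' (Matrix.toEuclideanCLM (𝕜 := ℂ) M x') : ℂ)
          ≤ matOpNorm M * ‖x'‖ ^ 2 := re_inner_le M x'
        _ ≤ 1 * ‖x'‖ ^ 2 := by
            apply mul_le_mul_of_nonneg_right hMn (by positivity)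
        _ = ‖x'‖ ^ 2 := one_mul _
    rw [h1, hid]
    rw [Complex.nonneg_iff]
    constructor
    · simp only [Complex.sub_re, Complex.ofReal_re]
      linarith [hre]
    · simp [him, Complex.sub_im, ← Complex.ofReal_pow]

lemma norm_sq_le_re_inner {M : Matrix (Fin n) (Fin n) ℂ} (hM : M.PosSemidef)
    (hMn : matOpNorm M ≤ 1) (x : EuclideanSpace ℂ (Fin n)) :
    ‖Matrix.toEuclideanCLM (𝕜 := ℂ) M x‖ ^ 2
      ≤ Complex.re (inner ℂ x (Matrix.toEuclideanCLM (𝕜 := ℂ) M x)) := by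
  set T := Matrix.toEuclideanCLM (𝕜 := ℂ) M
  have hsa : (inner ℂ (T x) (T x) : ℂ) = inner ℂ x (Matrix.toEuclideanCLM (𝕜 := ℂ) (M * M) x) := by
    have hadj : Matrix.toEuclideanCLM (𝕜 := ℂ) Mᴴ = ContinuousLinearMap.adjoint T := by
      rw [← ContinuousLinearMap.star_eq_adjoint, ← map_star]
      rfl
    rw [_root_.map_mul]
    calc (inner ℂ (T x) (T x) : ℂ) = inner ℂ x ((ContinuousLinearMap.adjoint T) (T x)) := by
          rw [ContinuousLinearMap.adjoint_inner_right]
      _ = inner ℂ x (Matrix.toEuclideanCLM (𝕜 := ℂ) Mᴴ (T x)) := by rw [hadj]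
      _ = _ := by rw [hM.1.eq]; rfl
  have hdiff : (0 : ℂ) ≤ inner ℂ x (Matrix.toEuclideanCLM (𝕜 := ℂ) (M - M * M) x) := by
    apply psd_inner_nonneg ?_ x
    obtain ⟨S, hS1, hS2⟩ : ∃ S : Matrix (Fin n) (Fin n) ℂ, S.PosSemidef ∧ S * S = M :=
      open scoped MatrixOrder in
      ⟨CFC.sqrt M, (CFC.sqrt_nonneg M).posSemidef, CFC.sqrt_mul_sqrt_self M hM.nonneg⟩
    have : M - M * M = S * (1 - M) * Sᴴ := by
      rw [hS1.1.eq, ← hS2]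
      noncomm_ring
    rw [this]
    exact (one_sub_psd hM hMn).mul_mul_conjTranspose_same _
  have hsplit : (inner ℂ x (Matrix.toEuclideanCLM (𝕜 := ℂ) (M - M * M) x) : ℂ)
      = inner ℂ x (T x) - inner ℂ x (Matrix.toEuclideanCLM (𝕜 := ℂ) (M * M) x) := by
    rw [map_sub]
    simp [inner_sub_right]
    rfl
  rw [hsplit] at hdiff
  have h2 : Complex.re (inner ℂ x (Matrix.toEuclideanCLM (𝕜 := ℂ) (M * M) x))
      ≤ Complex.re (inner ℂ x (T x)) := by
    rw [Complex.nonneg_iff] at hdiff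
    have := hdiff.1
    simp only [Complex.sub_re] at this
    linarith
  calc ‖T x‖ ^ 2 = Complex.re (inner ℂ (T x) (T x)) := by
        rw [← inner_self_eq_norm_sq (𝕜 := ℂ)]; rfl
    _ = Complex.re (inner ℂ x (Matrix.toEuclideanCLM (𝕜 := ℂ) (M * M) x)) := by rw [hsa]
    _ ≤ _ := h2


end OpProdAux

namespace OpProdAux
open Matrix
variable {n : ℕ} {Ω : Type*} [MeasurableSpace Ω]

lemma measurable_entry {A : Ω → Matrix (Fin n) (Fin n) ℂ} (hA : Measurable A) (a b : Fin n) :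
    Measurable fun ω => A ω a b :=
  (measurable_pi_apply b).comp ((measurable_pi_apply a).comp hA)

lemma measurable_matMul {A B : Ω → Matrix (Fin n) (Fin n) ℂ} (hA : Measurable A)
    (hB : Measurable B) : Measurable (fun ω => A ω * B ω) := by
  apply measurable_pi_lambda
  intro a
  apply measurable_pi_lambda
  intro b
  simp only [Matrix.mul_apply]
  exact Finset.measurable_sum _ fun c _ => (measurable_entry hA a c).mul (measurable_entry hB c b)

lemma measurable_coord {A : Ω → Matrix (Fin n) (Fin n) ℂ} (hA : Measurable A)
    (v : EuclideanSpace ℂ (Fin n)) (a : Fin n) :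
    Measurable fun ω => (Matrix.toEuclideanCLM (𝕜 := ℂ) (A ω) v) a := by
  simp only [apply_coord]
  exact Finset.measurable_sum _ fun b _ => (measurable_entry hA a b).mul_const _

lemma measurable_normsq {A : Ω → Matrix (Fin n) (Fin n) ℂ} (hA : Measurable A)
    (v : EuclideanSpace ℂ (Fin n)) :
    Measurable fun ω => ‖Matrix.toEuclideanCLM (𝕜 := ℂ) (A ω) v‖ ^ 2 := by
  simp only [normsq_eq]
  exact Finset.measurable_sum _ fun a _ => ((measurable_coord hA v a).norm).pow_const 2

lemma integrable_of_bdd {E : Type*} [NormedAddCommGroup E] {μ : Measure Ω} [IsFiniteMeasure μ]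
    {f : Ω → E} {C : ℝ} (hf : AEStronglyMeasurable f μ) (h : ∀ᵐ ω ∂μ, ‖f ω‖ ≤ C) :
    Integrable f μ :=
  ⟨hf, HasFiniteIntegral.of_bounded h⟩

/-- Complex version of `IndepFun.integral_mul`. -/
lemma integral_mul_complex {μ : Measure Ω} {f g : Ω → ℂ} (h : IndepFun f g μ)
    (hf : Integrable f μ) (hg : Integrable g μ) :
    ∫ ω, f ω * g ω ∂μ = (∫ ω, f ω ∂μ) * ∫ ω, g ω ∂μ := by
  have hfg : Integrable (fun ω => f ω * g ω) μ := h.integrable_mul hf hg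
  have h11 : IndepFun (fun ω => (f ω).re) (fun ω => (g ω).re) μ :=
    h.comp Complex.measurable_re Complex.measurable_re
  have h12 : IndepFun (fun ω => (f ω).re) (fun ω => (g ω).im) μ :=
    h.comp Complex.measurable_re Complex.measurable_im
  have h21 : IndepFun (fun ω => (f ω).im) (fun ω => (g ω).re) μ :=
    h.comp Complex.measurable_im Complex.measurable_re
  have h22 : IndepFun (fun ω => (f ω).im) (fun ω => (g ω).im) μ :=
    h.comp Complex.measurable_im Complex.measurable_im
  have ifr : Integrable (fun ω => (f ω).re) μ := by simpa using hf.re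
  have ifi : Integrable (fun ω => (f ω).im) μ := by simpa using hf.im
  have igr : Integrable (fun ω => (g ω).re) μ := by simpa using hg.re
  have igi : Integrable (fun ω => (g ω).im) μ := by simpa using hg.im
  have e11 : ∫ ω, (f ω).re * (g ω).re ∂μ = (∫ ω, (f ω).re ∂μ) * ∫ ω, (g ω).re ∂μ :=
    h11.integral_fun_mul_eq_mul_integral ifr.1 igr.1
  have e12 : ∫ ω, (f ω).re * (g ω).im ∂μ = (∫ ω, (f ω).re ∂μ) * ∫ ω, (g ω).im ∂μ :=
    h12.integral_fun_mul_eq_mul_integral ifr.1 igi.1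
  have e21 : ∫ ω, (f ω).im * (g ω).re ∂μ = (∫ ω, (f ω).im ∂μ) * ∫ ω, (g ω).re ∂μ :=
    h21.integral_fun_mul_eq_mul_integral ifi.1 igr.1
  have e22 : ∫ ω, (f ω).im * (g ω).im ∂μ = (∫ ω, (f ω).im ∂μ) * ∫ ω, (g ω).im ∂μ :=
    h22.integral_fun_mul_eq_mul_integral ifi.1 igi.1
  have Hre : ∀ {φ : Ω → ℂ}, Integrable φ μ → (∫ ω, φ ω ∂μ).re = ∫ ω, (φ ω).re ∂μ := by
    intro φ hφ
    simpa using (integral_re hφ).symm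
  have Him : ∀ {φ : Ω → ℂ}, Integrable φ μ → (∫ ω, φ ω ∂μ).im = ∫ ω, (φ ω).im ∂μ := by
    intro φ hφ
    simpa using (integral_im hφ).symm
  have i11 : Integrable (fun ω => (f ω).re * (g ω).re) μ := h11.integrable_mul ifr igr
  have i12 : Integrable (fun ω => (f ω).re * (g ω).im) μ := h12.integrable_mul ifr igi
  have i21 : Integrable (fun ω => (f ω).im * (g ω).re) μ := h21.integrable_mul ifi igr
  have i22 : Integrable (fun ω => (f ω).im * (g ω).im) μ := h22.integrable_mul ifi igi
  have hre : (∫ ω, f ω * g ω ∂μ).re = (∫ ω, (f ω).re ∂μ) * (∫ ω, (g ω).re ∂μ)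
      - (∫ ω, (f ω).im ∂μ) * (∫ ω, (g ω).im ∂μ) := by
    rw [Hre hfg]
    have : (fun ω => (f ω * g ω).re) =
        fun ω => (f ω).re * (g ω).re - (f ω).im * (g ω).im := by
      funext ω; exact Complex.mul_re _ _
    rw [this, integral_sub i11 i22, e11, e22]
  have him : (∫ ω, f ω * g ω ∂μ).im = (∫ ω, (f ω).re ∂μ) * (∫ ω, (g ω).im ∂μ)
      + (∫ ω, (f ω).im ∂μ) * (∫ ω, (g ω).re ∂μ) := by
    rw [Him hfg]
    have : (fun ω => (f ω * g ω).im) =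
        fun ω => (f ω).re * (g ω).im + (f ω).im * (g ω).re := by
      funext ω; exact Complex.mul_im _ _
    rw [this, integral_add i12 i21, e12, e21]
  have hfr := Hre hf
  have hfi := Him hf
  have hgr := Hre hg
  have hgi := Him hg
  apply Complex.ext
  · rw [hre, Complex.mul_re, hfr, hfi, hgr, hgi]
  · rw [him, Complex.mul_im, hfr, hfi, hgr, hgi]

end OpProdAux

namespace OpProdAux
open Matrix
variable {n k : ℕ} {Ω : Type*} [MeasurableSpace Ω]

noncomputable def Wmat (P : Fin k → Ω → Matrix (Fin n) (Fin n) ℂ) :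
    ℕ → Ω → Matrix (Fin n) (Fin n) ℂ
  | 0 => fun _ => 1
  | (j+1) => fun ω => (if h : j < k then P ⟨j, h⟩ ω else 1) * Wmat P j ω

lemma Wmat_succ (P : Fin k → Ω → Matrix (Fin n) (Fin n) ℂ) {j : ℕ} (h : j < k) (ω : Ω) :
    Wmat P (j+1) ω = P ⟨j, h⟩ ω * Wmat P j ω := by
  simp [Wmat, h]

lemma Wmat_measurable (P : Fin k → Ω → Matrix (Fin n) (Fin n) ℂ)
    (hmeas : ∀ i, Measurable (P i)) : ∀ j, Measurable (Wmat P j)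
  | 0 => measurable_const
  | (j+1) => by
      refine measurable_matMul ?_ (Wmat_measurable P hmeas j)
      by_cases h : j < k
      · simpa [h] using hmeas ⟨j, h⟩
      · simp only [h, dif_neg, not_false_iff]
        exact measurable_const

lemma Wmat_norm_le {μ : Measure Ω} (P : Fin k → Ω → Matrix (Fin n) (Fin n) ℂ)
    (hbd : ∀ i, ∀ᵐ ω ∂μ, matOpNorm (P i ω) ≤ 1) :
    ∀ j, ∀ᵐ ω ∂μ, matOpNorm (Wmat P j ω) ≤ 1
  | 0 => ae_of_all μ fun ω => matOpNorm_one_le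
  | (j+1) => by
      by_cases h : j < k
      · filter_upwards [hbd ⟨j, h⟩, Wmat_norm_le P hbd j] with ω h1 h2
        rw [Wmat_succ P h ω]
        calc matOpNorm (P ⟨j, h⟩ ω * Wmat P j ω)
            ≤ matOpNorm (P ⟨j, h⟩ ω) * matOpNorm (Wmat P j ω) := matOpNorm_mul_le _ _
          _ ≤ 1 * 1 := mul_le_mul h1 h2 (matOpNorm_nonneg _) zero_le_one
          _ = 1 := one_mul 1
      · filter_upwards [Wmat_norm_le P hbd j] with ω h2
        simp only [Wmat, h, dif_neg, not_false_iff, one_mul]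
        exact h2

lemma Wmat_eq (P : Fin k → Ω → Matrix (Fin n) (Fin n) ℂ) (ω : Ω) :
    ∀ j (hj : j ≤ k),
      Wmat P j ω = (List.ofFn fun i : Fin j => P (Fin.castLE hj i.rev) ω).prod
  | 0, _ => by simp [Wmat]
  | (j+1), hj => by
      have hjk : j < k := lt_of_lt_of_le (Nat.lt_succ_self j) hj
      have hhead : P (Fin.castLE hj (Fin.rev 0)) ω = P ⟨j, hjk⟩ ω := by
        have : Fin.castLE hj (Fin.rev 0) = (⟨j, hjk⟩ : Fin k) :=
          Fin.ext (by simp [Fin.val_rev])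
        rw [this]
      have htail : (fun i : Fin j => P (Fin.castLE hj (Fin.rev i.succ)) ω)
          = fun i : Fin j => P (Fin.castLE (le_of_lt hjk) (Fin.rev i)) ω := by
        funext i
        have : Fin.castLE hj (Fin.rev i.succ) = Fin.castLE (le_of_lt hjk) (Fin.rev i) :=
          Fin.ext (by simp only [Fin.coe_castLE, Fin.val_rev, Fin.val_succ]; omega)
        rw [this]
      rw [List.ofFn_succ, List.prod_cons, Wmat_succ P hjk ω,
        Wmat_eq P ω j (le_of_lt hjk), hhead, htail]

lemma Wmat_k (P : Fin k → Ω → Matrix (Fin n) (Fin n) ℂ) (ω : Ω) :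
    Wmat P k ω = revProd (fun i => P i ω) := by
  have h1 : (fun i : Fin k => P (Fin.castLE le_rfl (Fin.rev i)) ω)
      = fun i : Fin k => P (Fin.rev i) ω := by
    funext i
    have : Fin.castLE le_rfl (Fin.rev i) = Fin.rev i := Fin.ext (by simp)
    rw [this]
  rw [Wmat_eq P ω k le_rfl, revProd, h1]

noncomputable def gWfun (jj : Fin k) :
    ℕ → ((i : (Finset.Iio jj : Finset (Fin k))) → Matrix (Fin n) (Fin n) ℂ) →
      Matrix (Fin n) (Fin n) ℂ
  | 0 => fun _ => 1
  | (m+1) => fun t =>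
      (if h : m < jj.1 then
          t ⟨⟨m, h.trans jj.isLt⟩, by simpa [Finset.mem_Iio, Fin.lt_def] using h⟩
        else 1) * gWfun jj m t

lemma gWfun_measurable (jj : Fin k) : ∀ m, Measurable (gWfun (n := n) jj m)
  | 0 => measurable_const
  | (m+1) => by
      refine measurable_matMul ?_ (gWfun_measurable jj m)
      by_cases h : m < jj.1
      · simp only [h, dif_pos]
        exact measurable_pi_apply _
      · simp only [h, dif_neg, not_false_iff]
        exact measurable_const

lemma gWfun_spec (jj : Fin k) (P : Fin k → Ω → Matrix (Fin n) (Fin n) ℂ) (ω : Ω) :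
    ∀ m, m ≤ jj.1 → gWfun jj m (fun i => P i.1 ω) = Wmat P m ω
  | 0, _ => rfl
  | (m+1), hm => by
      have h1 : m < jj.1 := hm
      have h2 : m < k := h1.trans jj.isLt
      rw [Wmat_succ P h2 ω]
      simp only [gWfun, h1, dif_pos]
      rw [gWfun_spec jj P ω m (le_of_lt h1)]

end OpProdAux
namespace OpProdAux
open Matrix

set_option maxHeartbeats 2000000 in
lemma key_integral {Ω : Type*} [MeasurableSpace Ω] (μ : Measure Ω) [IsProbabilityMeasure μ]
    {n k : ℕ} (P : Fin k → Ω → Matrix (Fin n) (Fin n) ℂ)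
    (hmeas : ∀ i, Measurable (P i))
    (hindep : iIndepFun P μ)
    (hpsd : ∀ i, ∀ᵐ ω ∂μ, (P i ω).PosSemidef)
    (hbd : ∀ i, ∀ᵐ ω ∂μ, matOpNorm (P i ω) ≤ 1)
    {c : ℝ} (hc0 : 0 ≤ c)
    (hexp : ∀ i, matOpNorm (matExp μ (P i)) ≤ c)
    (v : EuclideanSpace ℂ (Fin n)) (hv : ‖v‖ ≤ 1) :
    ∀ j, j ≤ k → ∫ ω, ‖Matrix.toEuclideanCLM (𝕜 := ℂ) (Wmat P j ω) v‖ ^ 2 ∂μ ≤ c ^ j := by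
  intro j
  induction j with
  | zero =>
    intro _
    have h0 : ∀ ω : Ω, ‖Matrix.toEuclideanCLM (𝕜 := ℂ) (Wmat P 0 ω) v‖ ^ 2 = ‖v‖ ^ 2 := by
      intro ω
      simp only [Wmat, _root_.map_one, ContinuousLinearMap.one_apply]
    simp_rw [h0]
    rw [integral_const]
    simp only [measure_univ, ENNReal.toReal_one, smul_eq_mul, one_mul, pow_zero]
    simpa using pow_le_one₀ (n := 2) (norm_nonneg v) hv
  | succ j IH =>
    intro hj
    have hjk : j < k := hj
    have hjle : j ≤ k := le_of_lt hjk
    set jj : Fin k := ⟨j, hjk⟩ with hjj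
    set w : Ω → EuclideanSpace ℂ (Fin n) :=
      fun ω => Matrix.toEuclideanCLM (𝕜 := ℂ) (Wmat P j ω) v with hwdef
    set C : Matrix (Fin n) (Fin n) ℂ := matExp μ (P jj) with hCdef
    have hCle : matOpNorm C ≤ c := hexp jj
    have hWm : Measurable (Wmat P j) := Wmat_measurable P hmeas j
    have hwa : ∀ a, Measurable fun ω => w ω a := fun a => measurable_coord hWm v a
    have hwbd : ∀ᵐ ω ∂μ, ‖w ω‖ ≤ 1 := by
      filter_upwards [Wmat_norm_le P hbd j] with ω h1
      calc ‖w ω‖ ≤ matOpNorm (Wmat P j ω) * ‖v‖ := norm_apply_le _ _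
        _ ≤ 1 * 1 := mul_le_mul h1 hv (norm_nonneg v) zero_le_one
        _ = 1 := one_mul 1
    have hAbd := hbd jj
    have hApsd := hpsd jj
    -- independence of the coordinate pair functions
    have hIndepAB : ∀ a b : Fin n,
        IndepFun (fun ω => (starRingEnd ℂ) (w ω a) * w ω b) (fun ω => P jj ω a b) μ := by
      intro a b
      have hdisj : Disjoint (Finset.Iio jj) ({jj} : Finset (Fin k)) := by
        simp [Finset.disjoint_singleton_right, Finset.mem_Iio]
      have base := hindep.indepFun_finset (Finset.Iio jj) {jj} hdisj hmeas
      set φ : ((i : (Finset.Iio jj : Finset (Fin k))) → Matrix (Fin n) (Fin n) ℂ) → ℂ :=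
        fun t => (starRingEnd ℂ) (∑ b', gWfun jj j t a b' * v b')
          * (∑ b', gWfun jj j t b b' * v b') with hφ
      set ψ : ((i : ({jj} : Finset (Fin k))) → Matrix (Fin n) (Fin n) ℂ) → ℂ :=
        fun t => t ⟨jj, Finset.mem_singleton_self jj⟩ a b with hψ
      have hgm : Measurable (gWfun (n := n) jj j) := gWfun_measurable jj j
      have hsum : ∀ x : Fin n,
          Measurable fun t : ((i : (Finset.Iio jj : Finset (Fin k))) →
            Matrix (Fin n) (Fin n) ℂ) => ∑ b', gWfun jj j t x b' * v b' := by
        intro x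
        refine Finset.measurable_sum _ fun b' _ => ?_
        exact (measurable_entry hgm x b').mul_const _
      have hφm : Measurable φ := by
        rw [hφ]
        exact (Complex.continuous_conj.measurable.comp (hsum a)).mul (hsum b)
      have hψm : Measurable ψ := by
        rw [hψ]
        exact (measurable_pi_apply b).comp ((measurable_pi_apply a).comp (measurable_pi_apply _))
      have hcomp := base.comp hφm hψm
      have h1 : (φ ∘ fun ω (i : (Finset.Iio jj : Finset (Fin k))) => P i.1 ω) =
          fun ω => (starRingEnd ℂ) (w ω a) * w ω b := by
        funext ω
        have hg := gWfun_spec jj P ω j (le_refl j)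
        simp only [Function.comp_apply, hφ]
        rw [hg]
        rfl
      have h2 : (ψ ∘ fun ω (i : ({jj} : Finset (Fin k))) => P i.1 ω) =
          fun ω => P jj ω a b := rfl
      rw [← h1, ← h2]
      exact hcomp
    -- integrands
    set Hc : Ω → ℂ :=
      fun ω => (inner ℂ (w ω) (Matrix.toEuclideanCLM (𝕜 := ℂ) (P jj ω) (w ω)) : ℂ) with hHcdef
    set Kc : Ω → ℂ :=
      fun ω => (inner ℂ (w ω) (Matrix.toEuclideanCLM (𝕜 := ℂ) C (w ω)) : ℂ) with hKcdef
    have hHc_sum : ∀ ω, Hc ω = ∑ a, ∑ b, ((starRingEnd ℂ) (w ω a) * w ω b) * P jj ω a b := by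
      intro ω
      calc Hc ω = ∑ a, (starRingEnd ℂ) (w ω a) * ∑ b, P jj ω a b * w ω b := by
            simp [hHcdef, PiLp.inner_apply, RCLike.inner_apply, apply_coord]
            exact Finset.sum_congr rfl fun _ _ => mul_comm _ _
        _ = ∑ a, ∑ b, ((starRingEnd ℂ) (w ω a) * w ω b) * P jj ω a b := by
            refine Finset.sum_congr rfl fun a _ => ?_
            rw [Finset.mul_sum]
            refine Finset.sum_congr rfl fun b _ => ?_
            ring
    have hKc_sum : ∀ ω, Kc ω = ∑ a, ∑ b, ((starRingEnd ℂ) (w ω a) * w ω b) * C a b := by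
      intro ω
      calc Kc ω = ∑ a, (starRingEnd ℂ) (w ω a) * ∑ b, C a b * w ω b := by
            simp [hKcdef, PiLp.inner_apply, RCLike.inner_apply, apply_coord]
            exact Finset.sum_congr rfl fun _ _ => mul_comm _ _
        _ = ∑ a, ∑ b, ((starRingEnd ℂ) (w ω a) * w ω b) * C a b := by
            refine Finset.sum_congr rfl fun a _ => ?_
            rw [Finset.mul_sum]
            refine Finset.sum_congr rfl fun b _ => ?_
            ring
    -- integrability
    have iwab : ∀ a b : Fin n, Integrable (fun ω => (starRingEnd ℂ) (w ω a) * w ω b) μ := by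
      intro a b
      refine integrable_of_bdd (C := 1)
        (((Complex.continuous_conj.measurable.comp (hwa a)).mul (hwa b)).aestronglyMeasurable) ?_
      filter_upwards [hwbd] with ω h1
      rw [norm_mul, RingHomIsometric.norm_map]
      calc ‖w ω a‖ * ‖w ω b‖ ≤ ‖w ω‖ * ‖w ω‖ :=
            mul_le_mul (coord_le_norm _ a) (coord_le_norm _ b) (norm_nonneg _) (norm_nonneg _)
        _ ≤ 1 * 1 := mul_le_mul h1 h1 (norm_nonneg _) zero_le_one
        _ = 1 := one_mul 1
    have iA : ∀ a b : Fin n, Integrable (fun ω => P jj ω a b) μ := by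
      intro a b
      refine integrable_of_bdd (C := 1) (measurable_entry (hmeas jj) a b).aestronglyMeasurable ?_
      filter_upwards [hAbd] with ω h1
      exact (entry_le _ a b).trans h1
    have iprod : ∀ a b : Fin n,
        Integrable (fun ω => ((starRingEnd ℂ) (w ω a) * w ω b) * P jj ω a b) μ := by
      intro a b
      refine integrable_of_bdd (C := 1)
        ((((Complex.continuous_conj.measurable.comp (hwa a)).mul (hwa b)).mul
          (measurable_entry (hmeas jj) a b)).aestronglyMeasurable) ?_
      filter_upwards [hwbd, hAbd] with ω h1 h2
      rw [norm_mul, norm_mul, RingHomIsometric.norm_map]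
      have e1 : ‖w ω a‖ ≤ 1 := (coord_le_norm _ a).trans h1
      have e2 : ‖w ω b‖ ≤ 1 := (coord_le_norm _ b).trans h1
      have e3 : ‖P jj ω a b‖ ≤ 1 := (entry_le _ a b).trans h2
      have n1 : (0:ℝ) ≤ ‖w ω a‖ := norm_nonneg _
      have n2 : (0:ℝ) ≤ ‖w ω b‖ := norm_nonneg _
      have n3 : (0:ℝ) ≤ ‖P jj ω a b‖ := norm_nonneg _
      have h12 : ‖w ω a‖ * ‖w ω b‖ ≤ 1 := by nlinarith
      nlinarith [mul_nonneg n1 n2]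
    have iKprod : ∀ a b : Fin n,
        Integrable (fun ω => ((starRingEnd ℂ) (w ω a) * w ω b) * C a b) μ :=
      fun a b => (iwab a b).mul_const _
    have iHc : Integrable Hc μ := by
      have : Hc = fun ω => ∑ a, ∑ b, ((starRingEnd ℂ) (w ω a) * w ω b) * P jj ω a b :=
        funext hHc_sum
      rw [this]
      exact integrable_finset_sum _ fun a _ => integrable_finset_sum _ fun b _ => iprod a b
    have iKc : Integrable Kc μ := by
      have : Kc = fun ω => ∑ a, ∑ b, ((starRingEnd ℂ) (w ω a) * w ω b) * C a b :=
        funext hKc_sum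
      rw [this]
      exact integrable_finset_sum _ fun a _ => integrable_finset_sum _ fun b _ => iKprod a b
    have iG : Integrable (fun ω => ‖Matrix.toEuclideanCLM (𝕜 := ℂ)
        (P jj ω * Wmat P j ω) v‖ ^ 2) μ := by
      refine integrable_of_bdd (C := 1)
        (measurable_normsq (measurable_matMul (hmeas jj) hWm) v).aestronglyMeasurable ?_
      filter_upwards [hAbd, Wmat_norm_le P hbd j] with ω h1 h2
      have e1 : ‖Matrix.toEuclideanCLM (𝕜 := ℂ) (P jj ω * Wmat P j ω) v‖ ≤ 1 := by
        calc ‖Matrix.toEuclideanCLM (𝕜 := ℂ) (P jj ω * Wmat P j ω) v‖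
            ≤ matOpNorm (P jj ω * Wmat P j ω) * ‖v‖ := norm_apply_le _ _
          _ ≤ (matOpNorm (P jj ω) * matOpNorm (Wmat P j ω)) * ‖v‖ :=
              mul_le_mul_of_nonneg_right (matOpNorm_mul_le _ _) (norm_nonneg v)
          _ ≤ (1 * 1) * 1 := by
              refine mul_le_mul ?_ hv (norm_nonneg v) (by norm_num)
              exact mul_le_mul h1 h2 (matOpNorm_nonneg _) zero_le_one
          _ = 1 := by norm_num
      rw [Real.norm_eq_abs, abs_of_nonneg (by positivity)]
      nlinarith [norm_nonneg (Matrix.toEuclideanCLM (𝕜 := ℂ) (P jj ω * Wmat P j ω) v)]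
    have inormw : Integrable (fun ω => ‖w ω‖ ^ 2) μ := by
      refine integrable_of_bdd (C := 1) (measurable_normsq hWm v).aestronglyMeasurable ?_
      filter_upwards [hwbd] with ω h1
      rw [Real.norm_eq_abs, abs_of_nonneg (by positivity)]
      nlinarith [norm_nonneg (w ω)]
    have iHre : Integrable (fun ω => (Hc ω).re) μ := by simpa using iHc.re
    have iKre : Integrable (fun ω => (Kc ω).re) μ := by simpa using iKc.re
    -- main chain
    calc ∫ ω, ‖Matrix.toEuclideanCLM (𝕜 := ℂ) (Wmat P (j+1) ω) v‖ ^ 2 ∂μ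
        = ∫ ω, ‖Matrix.toEuclideanCLM (𝕜 := ℂ) (P jj ω * Wmat P j ω) v‖ ^ 2 ∂μ := by
          refine integral_congr_ae (ae_of_all μ fun ω => ?_)
          simp only
          rw [Wmat_succ P hjk ω]
      _ ≤ ∫ ω, (Hc ω).re ∂μ := by
          refine integral_mono_ae iG iHre ?_
          filter_upwards [hApsd, hAbd] with ω h1 h2
          have he : Matrix.toEuclideanCLM (𝕜 := ℂ) (P jj ω * Wmat P j ω) v
              = Matrix.toEuclideanCLM (𝕜 := ℂ) (P jj ω) (w ω) := by
            rw [_root_.map_mul]; rfl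
          rw [he]
          exact norm_sq_le_re_inner h1 h2 (w ω)
      _ = (∫ ω, Hc ω ∂μ).re := by simpa using integral_re iHc
      _ = (∑ a, ∑ b, (∫ ω, (starRingEnd ℂ) (w ω a) * w ω b ∂μ) * C a b).re := by
          congr 1
          calc ∫ ω, Hc ω ∂μ
              = ∫ ω, ∑ a, ∑ b, ((starRingEnd ℂ) (w ω a) * w ω b) * P jj ω a b ∂μ :=
                integral_congr_ae (ae_of_all μ hHc_sum)
            _ = ∑ a, ∫ ω, ∑ b, ((starRingEnd ℂ) (w ω a) * w ω b) * P jj ω a b ∂μ :=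
                integral_finset_sum _ fun a _ => integrable_finset_sum _ fun b _ => iprod a b
            _ = ∑ a, ∑ b, ∫ ω, ((starRingEnd ℂ) (w ω a) * w ω b) * P jj ω a b ∂μ :=
                Finset.sum_congr rfl fun a _ => integral_finset_sum _ fun b _ => iprod a b
            _ = ∑ a, ∑ b, (∫ ω, (starRingEnd ℂ) (w ω a) * w ω b ∂μ) * C a b := by
                refine Finset.sum_congr rfl fun a _ => Finset.sum_congr rfl fun b _ => ?_
                rw [integral_mul_complex (hIndepAB a b) (iwab a b) (iA a b)]
                rfl
      _ = (∫ ω, Kc ω ∂μ).re := by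
          congr 1
          calc ∑ a, ∑ b, (∫ ω, (starRingEnd ℂ) (w ω a) * w ω b ∂μ) * C a b
              = ∑ a, ∑ b, ∫ ω, ((starRingEnd ℂ) (w ω a) * w ω b) * C a b ∂μ := by
                refine Finset.sum_congr rfl fun a _ => Finset.sum_congr rfl fun b _ => ?_
                rw [integral_mul_const]
            _ = ∑ a, ∫ ω, ∑ b, ((starRingEnd ℂ) (w ω a) * w ω b) * C a b ∂μ :=
                (Finset.sum_congr rfl fun a _ =>
                  integral_finset_sum _ fun b _ => iKprod a b).symm
            _ = ∫ ω, ∑ a, ∑ b, ((starRingEnd ℂ) (w ω a) * w ω b) * C a b ∂μ :=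
                (integral_finset_sum _ fun a _ =>
                  integrable_finset_sum _ fun b _ => iKprod a b).symm
            _ = ∫ ω, Kc ω ∂μ := (integral_congr_ae (ae_of_all μ hKc_sum)).symm
      _ = ∫ ω, (Kc ω).re ∂μ := by simpa using (integral_re iKc).symm
      _ ≤ ∫ ω, c * ‖w ω‖ ^ 2 ∂μ := by
          refine integral_mono_ae iKre (inormw.const_mul c) ?_
          refine ae_of_all μ fun ω => ?_
          calc (Kc ω).re ≤ matOpNorm C * ‖w ω‖ ^ 2 := re_inner_le C (w ω)
            _ ≤ c * ‖w ω‖ ^ 2 := mul_le_mul_of_nonneg_right hCle (by positivity)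
      _ = c * ∫ ω, ‖w ω‖ ^ 2 ∂μ := integral_const_mul c _
      _ ≤ c * c ^ j := mul_le_mul_of_nonneg_left (IH hjle) hc0
      _ = c ^ (j+1) := by ring

end OpProdAux


open OpProdAux

set_option maxHeartbeats 2000000

/-- the vector form inside the proof of Theorem 3: if `P_1, …, P_k` are
independent random positive-semidefinite operators on an `n`-dimensional complex Hilbert space
with `‖P_i‖ ≤ 1` a.s. and `‖E[P_i]‖ ≤ 1 − δ`, then for every unit vector `v` and `Δ ≥ 0`,
`Pr[‖P_k ⋯ P_1 v‖ ≥ exp(−kδ/2 + Δ)] ≤ exp(−Δ²/(2k ln 2))`. -/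
theorem operator_product_vector_tail {Ω : Type*} [MeasurableSpace Ω] (μ : Measure Ω)
    [IsProbabilityMeasure μ] {n k : ℕ}
    (P : Fin k → Ω → Matrix (Fin n) (Fin n) ℂ)
    (hmeas : ∀ i, Measurable (P i))
    (hindep : iIndepFun P μ)
    (hpsd : ∀ i, ∀ᵐ ω ∂μ, (P i ω).PosSemidef)
    (hbd : ∀ i, ∀ᵐ ω ∂μ, matOpNorm (P i ω) ≤ 1)
    {δ : ℝ} (hδ0 : 0 ≤ δ) (hδ1 : δ ≤ 1)
    (hexp : ∀ i, matOpNorm (matExp μ (P i)) ≤ 1 - δ)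
    (v : EuclideanSpace ℂ (Fin n)) (hv : ‖v‖ = 1)
    {Δ : ℝ} (hΔ : 0 ≤ Δ) :
    μ {ω | Real.exp (-(k * δ) / 2 + Δ) ≤
        ‖Matrix.toEuclideanCLM (𝕜 := ℂ) (revProd fun i => P i ω) v‖} ≤
      ENNReal.ofReal (Real.exp (-Δ ^ 2 / (2 * k * Real.log 2))) := by
  classical
  set X : Ω → EuclideanSpace ℂ (Fin n) :=
    fun ω => Matrix.toEuclideanCLM (𝕜 := ℂ) (revProd fun i => P i ω) v with hX
  set t : ℝ := Real.exp (-(k * δ) / 2 + Δ) with ht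
  have ht0 : 0 < t := Real.exp_pos _
  have hWX : (fun ω => revProd fun i => P i ω) = Wmat P k := funext fun ω => (Wmat_k P ω).symm
  have haebd : ∀ᵐ ω ∂μ, ‖X ω‖ ≤ 1 := by
    filter_upwards [Wmat_norm_le P (μ := μ) hbd k] with ω h1
    have h2 : matOpNorm (revProd fun i => P i ω) ≤ 1 := by rw [← Wmat_k P ω] at *; exact h1
    calc ‖X ω‖ ≤ matOpNorm (revProd fun i => P i ω) * ‖v‖ := norm_apply_le _ _
      _ ≤ 1 * 1 := mul_le_mul h2 (le_of_eq hv) (norm_nonneg v) zero_le_one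
      _ = 1 := one_mul 1
  by_cases hcase : Δ ≤ k * δ / 2
  · -- Markov case
    have hc0 : (0:ℝ) ≤ 1 - δ := by linarith
    have key := key_integral μ P hmeas hindep hpsd hbd hc0 hexp v (le_of_eq hv) k le_rfl
    have key' : ∫ ω, ‖X ω‖ ^ 2 ∂μ ≤ (1 - δ) ^ k := by
      refine le_trans (le_of_eq (integral_congr_ae (ae_of_all μ fun ω => ?_))) key
      simp only [hX]
      rw [Wmat_k P ω]
    have hXm : Measurable fun ω => ‖X ω‖ ^ 2 := by
      simp only [hX, ← Wmat_k P]
      exact measurable_normsq (Wmat_measurable P hmeas k) v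
    have hInt : Integrable (fun ω => ‖X ω‖ ^ 2) μ := by
      refine integrable_of_bdd (C := 1) hXm.aestronglyMeasurable ?_
      filter_upwards [haebd] with ω h1
      rw [Real.norm_eq_abs, abs_of_nonneg (by positivity)]
      nlinarith [norm_nonneg (X ω)]
    have hlin : ∫⁻ ω, ENNReal.ofReal (‖X ω‖ ^ 2) ∂μ = ENNReal.ofReal (∫ ω, ‖X ω‖ ^ 2 ∂μ) :=
      (ofReal_integral_eq_lintegral_ofReal hInt (ae_of_all _ fun ω => by positivity)).symm
    have markov := mul_meas_ge_le_lintegral₀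
      (μ := μ) (f := fun ω => ENNReal.ofReal (‖X ω‖ ^ 2))
      (hXm.ennreal_ofReal.aemeasurable) (ENNReal.ofReal (t ^ 2))
    have hsub : {ω | t ≤ ‖X ω‖} ⊆
        {ω | ENNReal.ofReal (t ^ 2) ≤ ENNReal.ofReal (‖X ω‖ ^ 2)} := by
      intro ω hω
      simp only [Set.mem_setOf_eq] at *
      exact ENNReal.ofReal_le_ofReal (by nlinarith [norm_nonneg (X ω)])
    have hε0 : (ENNReal.ofReal (t ^ 2)) ≠ 0 := by
      simp only [ne_eq, ENNReal.ofReal_eq_zero, not_le]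
      positivity
    have hεtop : (ENNReal.ofReal (t ^ 2)) ≠ ⊤ := ENNReal.ofReal_ne_top
    have step1 : μ {ω | t ≤ ‖X ω‖} ≤
        (∫⁻ ω, ENNReal.ofReal (‖X ω‖ ^ 2) ∂μ) / ENNReal.ofReal (t ^ 2) := by
      refine le_trans (measure_mono hsub) ?_
      rw [ENNReal.le_div_iff_mul_le (Or.inl hε0) (Or.inl hεtop), mul_comm]
      exact markov
    have step2 : (∫⁻ ω, ENNReal.ofReal (‖X ω‖ ^ 2) ∂μ) / ENNReal.ofReal (t ^ 2)
        ≤ ENNReal.ofReal ((1 - δ) ^ k / t ^ 2) := by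
      rw [ENNReal.ofReal_div_of_pos (by positivity)]
      refine ENNReal.div_le_div_right ?_ _
      rw [hlin]
      exact ENNReal.ofReal_le_ofReal key'
    refine le_trans (le_trans step1 step2) (ENNReal.ofReal_le_ofReal ?_)
    -- real arithmetic
    have hlog2 : (0.6931471803 : ℝ) < Real.log 2 := Real.log_two_gt_d9
    have h1 : (1 - δ) ^ k ≤ Real.exp (-(k * δ)) := by
      have h1a : 1 - δ ≤ Real.exp (-δ) := by
        have := Real.add_one_le_exp (-δ)
        linarith
      calc (1 - δ) ^ k ≤ Real.exp (-δ) ^ k := pow_le_pow_left₀ hc0 h1a k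
        _ = Real.exp (-(k * δ)) := by
          rw [← Real.exp_nat_mul]
          ring_nf
    have ht2 : t ^ 2 = Real.exp (-(k * δ) + 2 * Δ) := by
      rw [ht, ← Real.exp_nat_mul]
      congr 1
      push_cast
      ring
    have hdiv : (1 - δ) ^ k / t ^ 2 ≤ Real.exp (-(2 * Δ)) := by
      rw [ht2]
      rw [div_le_iff₀ (Real.exp_pos _)]
      rw [← Real.exp_add]
      calc (1 - δ) ^ k ≤ Real.exp (-(k * δ)) := h1
        _ = Real.exp (-(2 * Δ) + (-(k * δ) + 2 * Δ)) := by ring_nf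
    refine hdiv.trans (Real.exp_le_exp.mpr ?_)
    -- -(2Δ) ≤ -Δ²/(2 k log 2)
    rcases eq_or_lt_of_le hΔ with hΔ0 | hΔpos
    · rw [← hΔ0]
      norm_num
    · have hk0 : 0 < (k:ℝ) := by
        by_contra hk
        push_neg at hk
        have : (k:ℝ) = 0 := le_antisymm hk (Nat.cast_nonneg k)
        rw [this] at hcase
        nlinarith
      have hlogpos : 0 < Real.log 2 := by linarith
      have hden : 0 < 2 * (k:ℝ) * Real.log 2 := by
        have h2k : 0 < 2 * (k:ℝ) := by linarith
        exact mul_pos h2k hlogpos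
      have hΔk : Δ ≤ (k:ℝ) / 2 := by nlinarith
      have key2 : Δ ^ 2 / (2 * (k:ℝ) * Real.log 2) ≤ 2 * Δ := by
        rw [div_le_iff₀ hden]
        nlinarith [mul_pos hΔpos hk0, mul_le_mul_of_nonneg_left hΔk (le_of_lt hΔpos)]
      have hnd : -Δ ^ 2 / (2 * (k:ℝ) * Real.log 2) = -(Δ ^ 2 / (2 * (k:ℝ) * Real.log 2)) :=
        neg_div _ _
      rw [hnd]
      linarith
  · -- a.s. empty case
    push_neg at hcase
    have ht1 : 1 < t := by
      rw [ht, ← Real.exp_zero]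
      apply Real.exp_lt_exp.mpr
      linarith
    have hnull : μ {ω | t ≤ ‖X ω‖} = 0 := by
      refine measure_mono_null (fun ω hω => ?_) ((ae_iff).mp haebd)
      simp only [Set.mem_setOf_eq] at *
      push_neg
      linarith
    rw [hnull]
    exact zero_le
end

section
/- Let G be a finite group with |G| ≥ 2, let n ≥ 1, let S be a nonempty finite multiset of elements of (ℤ_{|G|})^n that is ε-biased over (ℤ_{|G|})^n, and let ρ_1, …, ρ_n be irreducible unitary representations of G. Then for every g ∈ G, ‖ (1/|S|) Σ_{(s_1,…,s_n)∈S} ρ_1(g^{s_1}) ⊗ ⋯ ⊗ ρ_n(g^{s_n}) − Π_g^{ρ_1} ⊗ ⋯ ⊗ Π_g^{ρ_n} ‖ ≤ ε. -/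
open scoped BigOperators

/-- A multiset over an (additive) abelian group is `ε`-biased if every nontrivial
character averages to a complex number of modulus at most `ε` over `S`. -/
def IsEpsBiasedAdd {M : Type*} [AddCommGroup M] (S : Multiset M) (ε : ℝ) : Prop :=
  ∀ χ : AddChar M ℂ, χ ≠ 1 → ‖(Multiset.card S : ℂ)⁻¹ * (S.map fun s => χ s).sum‖ ≤ ε

/-- The `n`-fold Kronecker (tensor) product of square matrices `M i`, as a matrix indexed by
the product of the index types: `(⊗ᵢ Mᵢ)(a, b) = ∏ᵢ Mᵢ(aᵢ, bᵢ)`. -/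
noncomputable def piKron {n : ℕ} {d : Fin n → ℕ}
    (M : ∀ i, Matrix (Fin (d i)) (Fin (d i)) ℂ) :
    Matrix (∀ i, Fin (d i)) (∀ i, Fin (d i)) ℂ :=
  Matrix.of fun a b => ∏ i, M i (a i) (b i)

open scoped Matrix ComplexInnerProductSpace

section piKron
variable {n : ℕ} {d : Fin n → ℕ}

lemma piKron_mul (M N : ∀ i, Matrix (Fin (d i)) (Fin (d i)) ℂ) :
    piKron M * piKron N = piKron fun i => M i * N i := by
  ext a b
  simp only [piKron, Matrix.mul_apply, Matrix.of_apply]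
  rw [Finset.prod_univ_sum, Fintype.piFinset_univ]
  exact Finset.sum_congr rfl fun c _ => (Finset.prod_mul_distrib).symm

lemma piKron_one : piKron (fun i => (1 : Matrix (Fin (d i)) (Fin (d i)) ℂ)) = 1 := by
  ext a b
  simp only [piKron, Matrix.of_apply, Matrix.one_apply]
  by_cases h : a = b
  · subst h; simp
  · rw [if_neg h]
    obtain ⟨i, hi⟩ := Function.ne_iff.mp h
    exact Finset.prod_eq_zero (Finset.mem_univ i) (by simp [hi])

lemma piKron_conjTranspose (M : ∀ i, Matrix (Fin (d i)) (Fin (d i)) ℂ) :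
    (piKron M)ᴴ = piKron fun i => (M i)ᴴ := by
  ext a b
  simp [piKron, Matrix.conjTranspose_apply, map_prod]

lemma piKron_smul (c : ℂ) (M : ∀ i, Matrix (Fin (d i)) (Fin (d i)) ℂ) :
    piKron (fun i => c • M i) = c ^ n • piKron M := by
  ext a b
  simp only [piKron, Matrix.of_apply, Matrix.smul_apply, smul_eq_mul,
    Finset.prod_mul_distrib, Finset.prod_const, Finset.card_univ, Fintype.card_fin]

lemma piKron_sum {α : Type*} [Fintype α] (M : ∀ i, α → Matrix (Fin (d i)) (Fin (d i)) ℂ) :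
    piKron (fun i => ∑ x : α, M i x) = ∑ f : Fin n → α, piKron (fun i => M i (f i)) := by
  ext a b
  simp only [piKron, Matrix.of_apply, Matrix.sum_apply]
  rw [Finset.prod_univ_sum, Fintype.piFinset_univ]

end piKron

lemma pythagorean_sum {ι : Type*} [Fintype ι] {E : Type*} [NormedAddCommGroup E]
    [InnerProductSpace ℂ E] (w : ι → E)
    (h : ∀ i j, i ≠ j → (inner ℂ (w i) (w j) : ℂ) = 0) :
    ‖∑ i, w i‖ ^ 2 = ∑ i, ‖w i‖ ^ 2 := by
  have h1 : (inner ℂ (∑ i, w i) (∑ j, w j) : ℂ) = ∑ i, (inner ℂ (w i) (w i) : ℂ) := by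
    rw [sum_inner]
    refine Finset.sum_congr rfl fun i _ => ?_
    rw [inner_sum]
    exact Finset.sum_eq_single i (fun j _ hj => h i j (Ne.symm hj) ▸ rfl) (by simp)
  have h2 := norm_sq_eq_re_inner (𝕜 := ℂ) (∑ i, w i)
  rw [h1] at h2
  rw [h2, map_sum]
  exact Finset.sum_congr rfl fun i _ => (norm_sq_eq_re_inner (𝕜 := ℂ) (w i)).symm

lemma opNorm_sum_smul_proj_le {ι : Type*} [Fintype ι] [DecidableEq ι] {E : Type*}
    [NormedAddCommGroup E] [InnerProductSpace ℂ E] [CompleteSpace E]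
    (Q : ι → E →L[ℂ] E)
    (hmul : ∀ i j, i ≠ j → Q i * Q j = 0)
    (hstar : ∀ i, star (Q i) = Q i)
    (hsum : ∑ i, Q i = 1)
    (z : ι → ℂ) {ε : ℝ} (hε : 0 ≤ ε) (hz : ∀ i, ‖z i‖ ≤ ε) :
    ‖∑ i, z i • Q i‖ ≤ ε := by
  refine ContinuousLinearMap.opNorm_le_bound _ hε fun v => ?_
  have horth : ∀ i j, i ≠ j → (inner ℂ (Q i v) (Q j v) : ℂ) = 0 := by
    intro i j hij
    have e1 : (inner ℂ (Q i v) (Q j v) : ℂ) = inner ℂ v ((Q i * Q j) v) := by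
      calc (inner ℂ (Q i v) (Q j v) : ℂ)
          = inner ℂ ((ContinuousLinearMap.adjoint (Q i)) v) (Q j v) := by
            rw [← ContinuousLinearMap.star_eq_adjoint, hstar]
        _ = inner ℂ v (Q i (Q j v)) := ContinuousLinearMap.adjoint_inner_left _ _ _
        _ = inner ℂ v ((Q i * Q j) v) := rfl
    rw [e1, hmul i j hij]
    simp
  have hQv : ∀ i j, i ≠ j → (inner ℂ (z i • Q i v) (z j • Q j v) : ℂ) = 0 := fun i j hij => by
    rw [inner_smul_left, inner_smul_right, horth i j hij, mul_zero, mul_zero]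
  have happ : (∑ i, z i • Q i) v = ∑ i, z i • Q i v := by
    simp [ContinuousLinearMap.sum_apply]
  have hv : v = ∑ i, Q i v := by
    calc v = (1 : E →L[ℂ] E) v := rfl
      _ = (∑ i, Q i) v := by rw [hsum]
      _ = ∑ i, Q i v := by rw [ContinuousLinearMap.sum_apply]
  have hnv : ‖v‖ ^ 2 = ∑ i, ‖Q i v‖ ^ 2 := by
    conv_lhs => rw [hv]
    exact pythagorean_sum _ horth
  have hX : ‖(∑ i, z i • Q i) v‖ ^ 2 = ∑ i, ‖z i‖ ^ 2 * ‖Q i v‖ ^ 2 := by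
    rw [happ, pythagorean_sum _ hQv]
    exact Finset.sum_congr rfl fun i _ => by rw [norm_smul, mul_pow]
  have hle : ‖(∑ i, z i • Q i) v‖ ^ 2 ≤ (ε * ‖v‖) ^ 2 := by
    rw [hX, mul_pow, hnv, Finset.mul_sum]
    refine Finset.sum_le_sum fun i _ => ?_
    have h1 := hz i
    have h2 : (0:ℝ) ≤ ‖z i‖ := norm_nonneg _
    exact mul_le_mul_of_nonneg_right (by nlinarith) (sq_nonneg _)
  nlinarith [norm_nonneg ((∑ i, z i • Q i) v), mul_nonneg hε (norm_nonneg v)]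

section chi
variable {m n : ℕ} [NeZero m]

/-- the product character on `(ZMod m)^n` induced by `e` and a frequency vector `lam`. -/
noncomputable def chiC (e : AddChar (ZMod m) ℂ) (lam : Fin n → ZMod m) :
    AddChar (Fin n → ZMod m) ℂ where
  toFun s := ∏ i, e (lam i * s i)
  map_zero_eq_one' := by simp
  map_add_eq_mul' a b := by
    rw [← Finset.prod_mul_distrib]
    exact Finset.prod_congr rfl fun i _ => by
      rw [Pi.add_apply, mul_add, AddChar.map_add_eq_mul]

lemma chiC_apply (e : AddChar (ZMod m) ℂ) (lam s : Fin n → ZMod m) :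
    chiC e lam s = ∏ i, e (lam i * s i) := rfl

variable {e : AddChar (ZMod m) ℂ}

lemma esum (hprim : e.IsPrimitive) (b : ZMod m) :
    ∑ x : ZMod m, e (b * x) = if b = 0 then (m : ℂ) else 0 := by
  by_cases hb : b = 0
  · simp [hb, Finset.card_univ, ZMod.card]
  · rw [if_neg hb]
    have := AddChar.sum_eq_zero_of_ne_one (hprim hb)
    simpa [AddChar.mulShift_apply] using this

lemma chiC_inner_sum (hprim : e.IsPrimitive) (a : Fin n → ZMod m) :
    ∑ f : Fin n → ZMod m, ∏ i, e (a i * f i) = if a = 0 then ((m : ℂ)) ^ n else 0 := by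
  calc ∑ f : Fin n → ZMod m, ∏ i, e (a i * f i)
      = ∏ i, ∑ x : ZMod m, e (a i * x) := by
        rw [Finset.prod_univ_sum (fun _ : Fin n => (Finset.univ : Finset (ZMod m)))
          (fun i x => e (a i * x)), Fintype.piFinset_univ]
    _ = ∏ i, (if a i = 0 then (m : ℂ) else 0) :=
        Finset.prod_congr rfl fun i _ => esum hprim (a i)
    _ = if a = 0 then ((m : ℂ)) ^ n else 0 := by
        by_cases ha : a = 0
        · simp [ha]
        · rw [if_neg ha]
          obtain ⟨j, hj⟩ := Function.ne_iff.mp ha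
          have hj' : a j ≠ 0 := by simpa using hj
          exact Finset.prod_eq_zero (Finset.mem_univ j) (by rw [if_neg hj'])

lemma chiC_sum_s (hprim : e.IsPrimitive) (lam : Fin n → ZMod m) :
    ∑ s : Fin n → ZMod m, chiC e lam s = if lam = 0 then ((m : ℂ)) ^ n else 0 := by
  simp only [chiC_apply]
  exact chiC_inner_sum hprim lam

lemma chiC_sum_lam (hprim : e.IsPrimitive) (s : Fin n → ZMod m) :
    ∑ lam : Fin n → ZMod m, chiC e lam s = if s = 0 then ((m : ℂ)) ^ n else 0 := by
  simp only [chiC_apply]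
  calc ∑ lam : Fin n → ZMod m, ∏ i, e (lam i * s i)
      = ∑ lam : Fin n → ZMod m, ∏ i, e (s i * lam i) :=
        Finset.sum_congr rfl fun lam _ => Finset.prod_congr rfl fun i _ => by
          rw [mul_comm]
    _ = _ := chiC_inner_sum hprim s

lemma chiC_ne_one (hprim : e.IsPrimitive) {lam : Fin n → ZMod m} (hlam : lam ≠ 0) :
    chiC e lam ≠ 1 := by
  obtain ⟨j, hj⟩ := Function.ne_iff.mp hlam
  have hj' : lam j ≠ 0 := by simpa using hj
  obtain ⟨x, hx⟩ := AddChar.ne_one_iff.mp (hprim hj')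
  have hx' : e (lam j * x) ≠ 1 := by rwa [AddChar.mulShift_apply] at hx
  rw [AddChar.ne_one_iff]
  refine ⟨Pi.single j x, ?_⟩
  rw [chiC_apply, Finset.prod_eq_single j
    (fun i _ hi => by simp [Pi.single_eq_of_ne hi]) (by simp)]
  simpa [Pi.single_eq_same] using hx'

lemma chiC_mul (lam mu s : Fin n → ZMod m) :
    chiC e lam s * chiC e mu s = chiC e (lam + mu) s := by
  simp only [chiC_apply, ← Finset.prod_mul_distrib]
  exact Finset.prod_congr rfl fun i _ => by
    rw [← AddChar.map_add_eq_mul, Pi.add_apply, add_mul]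

lemma chiC_zero_apply (s : Fin n → ZMod m) : chiC e (0 : Fin n → ZMod m) s = 1 := by
  simp [chiC_apply]

lemma chiC_conj (hnorm : ∀ x : ZMod m, ‖e x‖ = 1) (lam s : Fin n → ZMod m) :
    (starRingEnd ℂ) (chiC e lam s) = chiC e lam (-s) := by
  simp only [chiC_apply, map_prod]
  refine Finset.prod_congr rfl fun i _ => ?_
  have h1 : e (lam i * s i) * e (lam i * (-s) i) = 1 := by
    rw [← AddChar.map_add_eq_mul, Pi.neg_apply, mul_neg, add_neg_cancel,
      AddChar.map_zero_eq_one]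
  have h2 : (e (lam i * s i))⁻¹ = (starRingEnd ℂ) (e (lam i * s i)) :=
    Complex.inv_eq_conj (hnorm _)
  rw [eq_inv_of_mul_eq_one_right h1]
  exact h2.symm

end chi


section rep
variable {m n : ℕ} [NeZero m] {G : Type*} [Group G] {d : Fin n → ℕ}

lemma pow_mod_eq {g : G} (hg : g ^ m = 1) (k : ℕ) : g ^ (k % m) = g ^ k := by
  conv_rhs => rw [← Nat.div_add_mod k m]
  rw [pow_add, pow_mul, hg, one_pow, one_mul]

lemma pow_val_add {g : G} (hg : g ^ m = 1) (a b : ZMod m) :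
    g ^ (a + b).val = g ^ a.val * g ^ b.val := by
  rw [ZMod.val_add, pow_mod_eq hg, pow_add]

noncomputable def Tm (ρ : ∀ i, G →* Matrix.unitaryGroup (Fin (d i)) ℂ) (g : G)
    (s : Fin n → ZMod m) : Matrix (∀ i, Fin (d i)) (∀ i, Fin (d i)) ℂ :=
  piKron fun i => (ρ i (g ^ (s i).val) : Matrix (Fin (d i)) (Fin (d i)) ℂ)

variable {ρ : ∀ i, G →* Matrix.unitaryGroup (Fin (d i)) ℂ} {g : G}

lemma Tm_add (hg : g ^ m = 1) (s t : Fin n → ZMod m) :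
    Tm ρ g (s + t) = Tm ρ g s * Tm ρ g t := by
  rw [Tm, Tm, Tm, piKron_mul]
  exact congrArg piKron (funext fun i => by
    rw [Pi.add_apply, pow_val_add hg, map_mul]; rfl)

lemma Tm_zero : Tm (m := m) ρ g 0 = 1 := by
  rw [Tm, show (fun i => (ρ i (g ^ ((0 : Fin n → ZMod m) i).val) : Matrix (Fin (d i)) (Fin (d i)) ℂ))
      = fun i => (1 : Matrix (Fin (d i)) (Fin (d i)) ℂ) from
    funext fun i => by rw [Pi.zero_apply, ZMod.val_zero, pow_zero, map_one]; rfl]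
  exact piKron_one

lemma Tm_star (hg : g ^ m = 1) (s : Fin n → ZMod m) :
    (Tm ρ g s)ᴴ = Tm ρ g (-s) := by
  rw [Tm, Tm, piKron_conjTranspose]
  refine congrArg piKron (funext fun i => ?_)
  have hinv : g ^ ((-s) i).val * g ^ (s i).val = 1 := by
    rw [← pow_val_add hg]
    have h0 : (-s) i + s i = 0 := by rw [Pi.neg_apply, neg_add_cancel]
    rw [h0, ZMod.val_zero, pow_zero]
  have h2 : g ^ ((-s) i).val = (g ^ (s i).val)⁻¹ := eq_inv_of_mul_eq_one_left hinv
  rw [h2, map_inv, ← Matrix.star_eq_conjTranspose]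
  rfl

/-- the `chiC e lam`-isotypic projection. -/
noncomputable def Pm (e : AddChar (ZMod m) ℂ) (ρ : ∀ i, G →* Matrix.unitaryGroup (Fin (d i)) ℂ)
    (g : G) (lam : Fin n → ZMod m) : Matrix (∀ i, Fin (d i)) (∀ i, Fin (d i)) ℂ :=
  ((m : ℂ) ^ n)⁻¹ • ∑ s : Fin n → ZMod m, chiC e lam (-s) • Tm ρ g s

variable {e : AddChar (ZMod m) ℂ}

lemma Pm_sum (hprim : e.IsPrimitive) :
    ∑ lam : Fin n → ZMod m, Pm e ρ g lam = 1 := by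
  have hmn : ((m : ℂ) ^ n) ≠ 0 := pow_ne_zero _ (Nat.cast_ne_zero.mpr (NeZero.ne m))
  simp only [Pm]
  rw [← Finset.smul_sum, Finset.sum_comm]
  simp_rw [← Finset.sum_smul]
  have h1 : ∀ s : Fin n → ZMod m,
      (∑ lam : Fin n → ZMod m, chiC e lam (-s)) = if s = 0 then ((m : ℂ)) ^ n else 0 := by
    intro s
    rw [chiC_sum_lam hprim (-s)]
    simp [neg_eq_zero]
  simp_rw [h1, ite_smul, zero_smul]
  rw [Finset.sum_ite_eq' Finset.univ (0 : Fin n → ZMod m)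
    (fun s => ((m : ℂ)) ^ n • Tm ρ g s)]
  simp [Tm_zero, smul_smul, inv_mul_cancel₀ hmn]

lemma Tm_mul_Pm (hg : g ^ m = 1) (u lam : Fin n → ZMod m) :
    Tm ρ g u * Pm e ρ g lam = chiC e lam u • Pm e ρ g lam := by
  simp only [Pm]
  rw [Matrix.mul_smul, Finset.mul_sum]
  simp_rw [Matrix.mul_smul, ← Tm_add hg]
  rw [show (∑ s : Fin n → ZMod m, chiC e lam (-s) • Tm ρ g (u + s))
      = ∑ t : Fin n → ZMod m, chiC e lam (u + -t) • Tm ρ g t from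
    Fintype.sum_equiv (Equiv.addLeft u) _ _ (fun s => by
      rw [show u + -((Equiv.addLeft u) s) = -s from by simp]
      rfl)]
  simp_rw [AddChar.map_add_eq_mul, mul_smul]
  rw [← Finset.smul_sum, smul_comm]

lemma chiC_neg_eq (lam s : Fin n → ZMod m) : chiC e lam (-s) = chiC e (-lam) s := by
  simp only [chiC_apply]
  exact Finset.prod_congr rfl fun i _ => by rw [Pi.neg_apply, Pi.neg_apply, mul_neg, neg_mul]

lemma Pm_mul_Pm (hg : g ^ m = 1) (hprim : e.IsPrimitive) (lam mu : Fin n → ZMod m) :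
    Pm e ρ g lam * Pm e ρ g mu = (if lam = mu then (1 : ℂ) else 0) • Pm e ρ g mu := by
  have hmn : ((m : ℂ) ^ n) ≠ 0 := pow_ne_zero _ (Nat.cast_ne_zero.mpr (NeZero.ne m))
  conv_lhs => rw [Pm]
  rw [Matrix.smul_mul, Finset.sum_mul]
  simp_rw [Matrix.smul_mul, Tm_mul_Pm hg, smul_smul]
  have hterm : ∀ s : Fin n → ZMod m,
      chiC e lam (-s) * chiC e mu s = chiC e (mu - lam) s := by
    intro s
    rw [chiC_neg_eq, chiC_mul]
    congr 1
    abel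
  simp_rw [hterm, ← Finset.sum_smul, chiC_sum_s hprim]
  by_cases hcase : lam = mu
  · rw [if_pos (sub_eq_zero.mpr hcase.symm), if_pos hcase, smul_smul,
      inv_mul_cancel₀ hmn]
  · rw [if_neg (fun h => hcase (sub_eq_zero.mp h).symm), if_neg hcase]
    simp




lemma Pm_star (hg : g ^ m = 1) (hnorm : ∀ x : ZMod m, ‖e x‖ = 1) (lam : Fin n → ZMod m) :
    (Pm e ρ g lam)ᴴ = Pm e ρ g lam := by
  simp only [Pm]
  rw [Matrix.conjTranspose_smul, Matrix.conjTranspose_sum]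
  have hc : star (((m : ℂ) ^ n)⁻¹) = ((m : ℂ) ^ n)⁻¹ := by simp
  rw [hc]
  congr 1
  rw [show (∑ s : Fin n → ZMod m, (chiC e lam (-s) • Tm ρ g s)ᴴ)
      = ∑ s : Fin n → ZMod m, chiC e lam s • Tm ρ g (-s) from
    Finset.sum_congr rfl fun s _ => by
      rw [Matrix.conjTranspose_smul, Tm_star hg]
      congr 1
      rw [Complex.star_def, chiC_conj hnorm, neg_neg]]
  exact Fintype.sum_equiv (Equiv.neg _) _ _ (fun s => by simp)

lemma range_sum_eq_zmod {A : Type*} [AddCommMonoid A] (f : ℕ → A)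
    (hf : ∀ k, f (k % m) = f k) :
    ∑ t ∈ Finset.range m, f t = ∑ x : ZMod m, f x.val := by
  refine Finset.sum_nbij' (fun t => ((t : ZMod m))) (fun x => x.val)
    (fun a _ => Finset.mem_univ _) (fun x _ => Finset.mem_range.mpr (ZMod.val_lt x))
    (fun a ha => ?_) (fun x _ => ZMod.natCast_rightInverse x) (fun a ha => ?_)
  · rw [ZMod.val_natCast, Nat.mod_eq_of_lt (Finset.mem_range.mp ha)]
  · rw [ZMod.val_natCast, hf]

end rep

lemma multiset_sum_map_smul {β I : Type*} [Fintype I] [DecidableEq I]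
    (S : Multiset β) (f : β → ℂ) (M : Matrix I I ℂ) :
    (S.map fun s => f s • M).sum = (S.map f).sum • M := by
  induction S using Multiset.induction with
  | empty => simp
  | cons a s ih => simp [ih, add_smul]

theorem aux_bound {G : Type*} [Group G] {m : ℕ} [NeZero m] (hm : 2 ≤ m) {n : ℕ} (hn : 1 ≤ n)
    (S : Multiset (Fin n → ZMod m)) (hS : S ≠ 0) {ε : ℝ}
    (hbias : IsEpsBiasedAdd S ε) {d : Fin n → ℕ}
    (ρ : ∀ i, G →* Matrix.unitaryGroup (Fin (d i)) ℂ) (g : G) (hg : g ^ m = 1) :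
    ‖Matrix.toEuclideanCLM (𝕜 := ℂ)
      ((Multiset.card S : ℂ)⁻¹ • (S.map (Tm ρ g)).sum -
        ((m : ℂ) ^ n)⁻¹ • ∑ f : Fin n → ZMod m, Tm ρ g f)‖ ≤ ε := by
  classical
  have hm0 : m ≠ 0 := by omega
  -- the standard primitive additive character of `ZMod m`
  have hζ1 : Complex.exp (2 * Real.pi * Complex.I / m) ^ m = 1 :=
    (Complex.isPrimitiveRoot_exp m hm0).pow_eq_one
  set e : AddChar (ZMod m) ℂ := AddChar.zmodChar m hζ1 with hedef
  have hprim : e.IsPrimitive :=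
    AddChar.zmodChar_primitive_of_primitive_root m (Complex.isPrimitiveRoot_exp m hm0)
  have hζnorm : ‖Complex.exp (2 * Real.pi * Complex.I / m)‖ = 1 := by
    have h1 : ‖Complex.exp (2 * Real.pi * Complex.I / m)‖ ^ m = 1 := by
      rw [← norm_pow, hζ1, norm_one]
    rcases lt_trichotomy ‖Complex.exp (2 * Real.pi * Complex.I / m)‖ 1 with h | h | h
    · have := pow_lt_one₀ (norm_nonneg _) h hm0; linarith
    · exact h
    · have := one_lt_pow₀ h hm0; linarith
  have hnorm : ∀ x : ZMod m, ‖e x‖ = 1 := by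
    intro x
    rw [hedef, AddChar.zmodChar_apply, norm_pow, hζnorm, one_pow]
  haveI : Fact (1 < m) := ⟨by omega⟩
  have hone : ((fun _ => 1 : Fin n → ZMod m)) ≠ 0 := by
    intro h
    have h2 := congr_fun h ⟨0, hn⟩
    exact one_ne_zero h2
  have hε : 0 ≤ ε :=
    le_trans (norm_nonneg _) (hbias (chiC e (fun _ => 1)) (chiC_ne_one hprim hone))
  -- the Fourier coefficients of the average over `S`
  set c : (Fin n → ZMod m) → ℂ := fun lam =>
    (Multiset.card S : ℂ)⁻¹ * (S.map fun s => chiC e lam s).sum with hcdef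
  have hSfin : (Multiset.card S : ℂ) ≠ 0 :=
    Nat.cast_ne_zero.mpr fun h => hS (Multiset.card_eq_zero.mp h)
  have hc0 : c 0 = 1 := by
    rw [hcdef]
    simp only [chiC_zero_apply]
    have h1 : (S.map fun _ => (1 : ℂ)).sum = (Multiset.card S : ℂ) := by simp
    rw [h1, inv_mul_cancel₀ hSfin]
  have hcb : ∀ lam : Fin n → ZMod m, lam ≠ 0 → ‖c lam‖ ≤ ε := fun lam hlam =>
    hbias (chiC e lam) (chiC_ne_one hprim hlam)
  set B : Matrix (∀ i, Fin (d i)) (∀ i, Fin (d i)) ℂ :=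
    (Multiset.card S : ℂ)⁻¹ • (S.map (Tm ρ g)).sum with hBdef
  have hPi : ((m : ℂ) ^ n)⁻¹ • ∑ f : Fin n → ZMod m, Tm ρ g f = Pm e ρ g 0 := by
    rw [Pm]
    congr 1
    exact (Finset.sum_congr rfl fun s _ => by rw [chiC_zero_apply, one_smul]).symm
  set z : (Fin n → ZMod m) → ℂ := fun lam => if lam = 0 then 0 else c lam with hzdef
  have hBP : ∀ lam : Fin n → ZMod m, B * Pm e ρ g lam = c lam • Pm e ρ g lam := by
    intro lam
    rw [hBdef, Matrix.smul_mul, ← Multiset.sum_map_mul_right,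
      show S.map (fun s => Tm ρ g s * Pm e ρ g lam)
          = S.map (fun s => chiC e lam s • Pm e ρ g lam) from
        Multiset.map_congr rfl fun s _ => Tm_mul_Pm hg s lam,
      multiset_sum_map_smul, smul_smul]
  have hD : B - ((m : ℂ) ^ n)⁻¹ • ∑ f : Fin n → ZMod m, Tm ρ g f
      = ∑ lam : Fin n → ZMod m, z lam • Pm e ρ g lam := by
    have h1 : B - ((m : ℂ) ^ n)⁻¹ • ∑ f : Fin n → ZMod m, Tm ρ g f
        = (B - ((m : ℂ) ^ n)⁻¹ • ∑ f : Fin n → ZMod m, Tm ρ g f) *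
            ∑ lam : Fin n → ZMod m, Pm e ρ g lam := by
      rw [Pm_sum hprim, mul_one]
    rw [h1, Finset.mul_sum]
    refine Finset.sum_congr rfl fun lam _ => ?_
    rw [Matrix.sub_mul, hBP lam, hPi, Pm_mul_Pm hg hprim 0 lam]
    by_cases hcase : lam = 0
    · subst hcase
      simp [hc0, hzdef]
    · rw [if_neg fun h => hcase h.symm, zero_smul, sub_zero, hzdef]
      simp only [if_neg hcase]
  rw [hD, map_sum]
  have hterm : ∀ lam : Fin n → ZMod m,
      Matrix.toEuclideanCLM (𝕜 := ℂ) (z lam • Pm e ρ g lam)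
        = z lam • Matrix.toEuclideanCLM (𝕜 := ℂ) (Pm e ρ g lam) := fun lam => map_smul _ _ _
  simp_rw [hterm]
  refine opNorm_sum_smul_proj_le _ (fun i j hij => ?_) (fun i => ?_) ?_ z hε (fun lam => ?_)
  · rw [← map_mul, Pm_mul_Pm hg hprim, if_neg hij, zero_smul, map_zero]
  · rw [← map_star]
    congr 1
    rw [Matrix.star_eq_conjTranspose, Pm_star hg hnorm]
  · rw [← map_sum, Pm_sum hprim, map_one]
  · by_cases h : lam = 0
    · rw [hzdef]; simp only [if_pos h, norm_zero]; exact hε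
    · rw [hzdef]; simp only [if_neg h]; exact hcb lam h

/-- the error estimate in the proof of Theorem 1: if `S` is `ε`-biased
over `(ℤ_{|G|})^n`, then for irreducible unitary representations `ρ_1, …, ρ_n` of `G` and any
`g ∈ G`, the average of `ρ_1(g^{s_1}) ⊗ ⋯ ⊗ ρ_n(g^{s_n})` over `s ∈ S` is within `ε`
(in operator norm) of `Π_g^{ρ_1} ⊗ ⋯ ⊗ Π_g^{ρ_n}`. -/
theorem avg_tensor_close_to_proj {G : Type*} [Group G] [Fintype G]
    (hG : 2 ≤ Fintype.card G) {n : ℕ} (hn : 1 ≤ n)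
    (S : Multiset (Fin n → ZMod (Fintype.card G))) (hS : S ≠ 0) {ε : ℝ}
    (hbias : IsEpsBiasedAdd S ε) {d : Fin n → ℕ}
    (ρ : ∀ i, G →* Matrix.unitaryGroup (Fin (d i)) ℂ)
    (hirr : ∀ i, IsIrreducibleRep (ρ i)) (g : G) :
    matOpNorm
      ((Multiset.card S : ℂ)⁻¹ •
          (S.map fun s =>
            piKron fun i => (ρ i (g ^ (s i).val) : Matrix (Fin (d i)) (Fin (d i)) ℂ)).sum -
        piKron fun i => cyclicProj (ρ i) g) ≤ ε := by
  classical
  haveI : NeZero (Fintype.card G) := ⟨by omega⟩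
  have hg : g ^ Fintype.card G = 1 := pow_card_eq_one
  have hPi : (piKron fun i => cyclicProj (ρ i) g)
      = ((Fintype.card G : ℂ) ^ n)⁻¹ •
          ∑ f : Fin n → ZMod (Fintype.card G), Tm ρ g f := by
    have h1 : ∀ i : Fin n, cyclicProj (ρ i) g
        = (Fintype.card G : ℂ)⁻¹ • ∑ x : ZMod (Fintype.card G),
            (ρ i (g ^ x.val) : Matrix (Fin (d i)) (Fin (d i)) ℂ) := by
      intro i
      rw [cyclicProj]
      congr 1
      exact range_sum_eq_zmod (fun k => (ρ i (g ^ k) : Matrix (Fin (d i)) (Fin (d i)) ℂ))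
        (fun k => congrArg (fun h : G => ((ρ i) h : Matrix (Fin (d i)) (Fin (d i)) ℂ))
          (pow_mod_eq hg k))
    calc (piKron fun i => cyclicProj (ρ i) g)
        = piKron (fun i => (Fintype.card G : ℂ)⁻¹ • ∑ x : ZMod (Fintype.card G),
            (ρ i (g ^ x.val) : Matrix (Fin (d i)) (Fin (d i)) ℂ)) :=
          congrArg piKron (funext h1)
      _ = ((Fintype.card G : ℂ)⁻¹) ^ n • piKron (fun i => ∑ x : ZMod (Fintype.card G),
            (ρ i (g ^ x.val) : Matrix (Fin (d i)) (Fin (d i)) ℂ)) :=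
          piKron_smul _ _
      _ = ((Fintype.card G : ℂ) ^ n)⁻¹ •
            ∑ f : Fin n → ZMod (Fintype.card G), Tm ρ g f := by
          rw [piKron_sum, inv_pow]
          rfl
  simp only [matOpNorm]
  rw [hPi]
  exact aux_bound hG hn S hS hbias ρ g hg
end
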